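/- arXiv:1604.02307 — 4 statements merged into one kernel-verified Lean document; each statement's English description precedes it below -/
import Mathlib

section
/- For every q ≥ 1 there exists a constant C > 0, depending only on q, such that for every Lévy measure ν and every jointly Borel measurable function f : ℝ × ℝ → ℝ one has ‖ s ↦ ∫_ℝ |f(u, s)| du ‖_{q,ν} ≤ C ∫_ℝ ‖ f(u, ·) ‖_{q,ν} du, where both sides take values in [0, ∞] and the right-hand side is a Lebesgue (upper) integral in u. -/
open MeasureTheory Set
open scoped ENNReal

noncomputable section

/-- `φ_q(x) = |x|^q · 1_{|x|>1} + x² · 1_{|x|≤1}`. -/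
def phi (q x : ℝ) : ℝ := if |x| ≤ 1 then x ^ 2 else |x| ^ q

/-- `Φ_{q,ν}(F) = ∫_ℝ ∫_ℝ φ_q(F(s)·u) ds ν(du)`. -/
def PhiFun (q : ℝ) (ν : Measure ℝ) (F : ℝ → ℝ) : ℝ≥0∞ :=
  ∫⁻ u : ℝ, (∫⁻ s : ℝ, ENNReal.ofReal (phi q (F s * u))) ∂ν

/-- `‖F‖_{q,ν} = inf {λ > 0 : Φ_{q,ν}(F/λ) ≤ 1}`, with `inf ∅ = ∞`. -/
def levyNorm (q : ℝ) (ν : Measure ℝ) (F : ℝ → ℝ) : ℝ≥0∞ :=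
  sInf ((fun l : ℝ => ENNReal.ofReal l) ''
    {l : ℝ | 0 < l ∧ PhiFun q ν (fun s => F s / l) ≤ 1})

def psi (q x : ℝ) : ℝ := if x ≤ 1 then x ^ 2 / 2 else 1 / 2 + (x ^ q - 1) / q

def Dq (q m : ℝ) : ℝ := if m ≤ 1 then m else m ^ (q - 1)

lemma phi_nonneg (q x : ℝ) : 0 ≤ phi q x := by
  unfold phi; split
  · positivity
  · exact Real.rpow_nonneg (abs_nonneg x) q

lemma phi_zero (q : ℝ) : phi q 0 = 0 := by simp [phi]

lemma phi_abs (q x : ℝ) : phi q |x| = phi q x := by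
  unfold phi; rw [abs_abs, sq_abs]

lemma phi_mono {q : ℝ} (hq : 1 ≤ q) {a b : ℝ} (ha : 0 ≤ a) (hab : a ≤ b) :
    phi q a ≤ phi q b := by
  have hb : 0 ≤ b := ha.trans hab
  unfold phi
  rw [abs_of_nonneg ha, abs_of_nonneg hb]
  split_ifs with h1 h2 h3
  · nlinarith
  · calc a ^ 2 ≤ 1 := by nlinarith
    _ ≤ b ^ q := Real.one_le_rpow (by linarith [lt_of_not_ge h2]) (by linarith)
  · exact absurd (hab.trans h3) h1
  · exact Real.rpow_le_rpow ha hab (by linarith)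

lemma measurable_phi (q : ℝ) : Measurable (phi q) := by
  unfold phi
  apply Measurable.ite
  · exact measurableSet_le (measurable_id.abs) measurable_const
  · exact (measurable_id.pow_const 2)
  · exact measurable_id.abs.pow measurable_const

lemma measurable_psi (q : ℝ) : Measurable (psi q) := by
  unfold psi
  apply Measurable.ite
  · exact measurableSet_le measurable_id measurable_const
  · exact (measurable_id.pow_const 2).div_const 2
  · exact measurable_const.add (((measurable_id.pow measurable_const).sub measurable_const).div_const q)

lemma psi_nonneg {q x : ℝ} (hq : 1 ≤ q) (hx : 0 ≤ x) : 0 ≤ psi q x := by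
  unfold psi; split_ifs with h
  · positivity
  · have : (1:ℝ) ≤ x ^ q := Real.one_le_rpow (by linarith) (by linarith)
    have hq0 : (0:ℝ) < q := by linarith
    have : 0 ≤ (x ^ q - 1) / q := div_nonneg (by linarith) hq0.le
    linarith

lemma psi_le_phi {q x : ℝ} (hq : 1 ≤ q) (hx : 0 ≤ x) : psi q x ≤ phi q x := by
  unfold psi phi
  rw [abs_of_nonneg hx]
  split_ifs with h
  · nlinarith
  · have hx1 : (1:ℝ) ≤ x ^ q := Real.one_le_rpow (by linarith) (by linarith)
    have hq0 : (0:ℝ) < q := by linarith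
    have : (x ^ q - 1) / q ≤ x ^ q - 1 := div_le_self (by linarith) hq
    linarith

lemma bern {s p : ℝ} (hs : -1 ≤ s) (hp : 1 ≤ p) : 1 + p * s ≤ (1 + s) ^ p :=
  one_add_mul_self_le_rpow_one_add hs hp

lemma phi_le_psi_two {q x : ℝ} (hq : 1 ≤ q) (hx : 0 ≤ x) : phi q x ≤ psi q (2 * x) := by
  have hq0 : (0:ℝ) < q := by linarith
  unfold phi psi
  rw [abs_of_nonneg hx]
  split_ifs with h1 h2 h3
  · nlinarith
  · -- x ≤ 1, 2x > 1 : x² ≤ 1/2 + ((2x)^q - 1)/q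
    push_neg at h2
    have hb : 1 + q * (2*x - 1) ≤ (2*x) ^ q := by
      have := bern (s := 2*x - 1) (p := q) (by linarith) hq
      simpa using this
    have h2x : (2*x) ^ q - 1 ≥ q * (2*x - 1) := by linarith
    have : (2*x - 1) ≤ ((2*x)^q - 1)/q := by
      rw [ge_iff_le, ← sub_nonneg] at h2x
      rw [le_div_iff₀ hq0]; nlinarith
    nlinarith
  · -- x > 1 but 2x ≤ 1 : impossible
    exfalso; push_neg at h1; linarith
  · -- x > 1 : x^q ≤ 1/2 + ((2x)^q - 1)/q
    push_neg at h1
    have h2q : (1:ℝ) + q ≤ 2 ^ q := by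
      have := bern (s := (1:ℝ)) (p := q) (by norm_num) hq
      norm_num at this; linarith
    have hxq1 : (1:ℝ) ≤ x ^ q := Real.one_le_rpow h1.le hq0.le
    have h2xq : (2*x) ^ q = 2 ^ q * x ^ q := Real.mul_rpow (by norm_num) (by linarith)
    have hkey : (1 + q) * x ^ q ≤ (2*x) ^ q := by
      rw [h2xq]
      exact mul_le_mul_of_nonneg_right h2q (Real.rpow_nonneg (by linarith) q)
    have : x ^ q + (x ^ q - 1)/q ≤ ((2*x)^q - 1)/q := by
      have e : ((2*x)^q - 1)/q = (x^q-1)/q + ((2*x)^q - x^q)/q := by ring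
      have h2 : x^q ≤ ((2*x)^q - x^q)/q := by
        rw [le_div_iff₀ hq0]; nlinarith
      linarith
    have h0 : 0 ≤ (x ^ q - 1)/q := div_nonneg (by linarith) hq0.le
    linarith

lemma rpow_sub_one_mul {q m : ℝ} (hm : 0 < m) : m ^ (q-1) * m = m ^ q := by
  nth_rewrite 2 [← Real.rpow_one m]
  rw [← Real.rpow_add hm, sub_add_cancel]

lemma psi_le_Dq_mul {q m : ℝ} (hq : 1 ≤ q) (hm : 0 ≤ m) : psi q m ≤ Dq q m * m := by
  have h := psi_le_phi hq hm
  unfold phi at h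
  rw [abs_of_nonneg hm] at h
  unfold Dq
  split_ifs with h1
  · rw [if_pos h1] at h
    unfold psi; rw [if_pos h1]
    nlinarith [sq_nonneg m]
  · have h1' : 1 < m := lt_of_not_ge h1
    rw [if_neg h1] at h
    rw [rpow_sub_one_mul (by linarith)]
    exact h

lemma Dq_nonneg {q m : ℝ} (hq : 1 ≤ q) (hm : 0 ≤ m) : 0 ≤ Dq q m := by
  unfold Dq; split_ifs
  · exact hm
  · exact Real.rpow_nonneg hm _


lemma support_line {q m x : ℝ} (hq : 1 ≤ q) (hm : 0 ≤ m) (hx : 0 ≤ x) :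
    psi q m + Dq q m * x ≤ psi q x + Dq q m * m := by
  have hq0 : (0:ℝ) < q := by linarith
  unfold psi Dq
  split_ifs with h1 h2 h2
  · nlinarith [sq_nonneg (x - m)]
  · -- m ≤ 1 < x
    push_neg at h2
    have hb : 1 + q * (x - 1) ≤ x ^ q := by
      have := bern (s := x - 1) (p := q) (by linarith) hq
      simpa using this
    have hxx : x - 1 ≤ (x ^ q - 1)/q := by
      rw [le_div_iff₀ hq0]; nlinarith
    nlinarith [mul_nonneg (sub_nonneg.2 h1) (by linarith : (0:ℝ) ≤ x - 1), sq_nonneg (1 - m)]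
  · -- x ≤ 1 < m
    push_neg at h1
    set A := m ^ q with hA
    set B := m ^ (q-1) with hB
    have hm0 : (0:ℝ) < m := by linarith
    have hBm : B * m = A := rpow_sub_one_mul hm0
    have hA0 : (0:ℝ) < A := Real.rpow_pos_of_pos hm0 q
    have hB1 : (1:ℝ) ≤ B := Real.one_le_rpow h1.le (by linarith)
    have hinv : 1 + q * (m⁻¹ - 1) ≤ A⁻¹ := by
      have := bern (s := m⁻¹ - 1) (p := q) (by have := inv_nonneg.2 hm0.le; linarith) hq
      have e : (1 + (m⁻¹ - 1)) = m⁻¹ := by ring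
      rw [e, Real.inv_rpow hm0.le] at this
      exact this
    have hAB : A - 1 ≤ q * (B * (m - 1)) := by
      have h3 : (1 + q * (m⁻¹ - 1)) * A ≤ 1 := by
        calc (1 + q * (m⁻¹ - 1)) * A ≤ A⁻¹ * A := mul_le_mul_of_nonneg_right hinv hA0.le
        _ = 1 := inv_mul_cancel₀ hA0.ne'
      have e2 : m⁻¹ * A = B := by
        rw [← hBm, mul_comm B m, ← mul_assoc, inv_mul_cancel₀ hm0.ne', one_mul]
      nlinarith [hA0]
    have hdiv : (A - 1)/q ≤ B * (m - 1) := by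
      rw [div_le_iff₀ hq0]; linarith
    have hBx : B * (x - 1) ≤ x - 1 := by nlinarith
    nlinarith [sq_nonneg (x - 1)]
  · -- 1 < m, 1 < x
    push_neg at h1 h2
    have hm0 : (0:ℝ) < m := by linarith
    set A := m ^ q with hA
    set B := m ^ (q-1) with hB
    set X := x ^ q with hX
    have hBm : B * m = A := rpow_sub_one_mul hm0
    have hA0 : (0:ℝ) < A := Real.rpow_pos_of_pos hm0 q
    have hbern : 1 + q * (x/m - 1) ≤ X / A := by
      have := bern (s := x/m - 1) (p := q) (by have h := div_nonneg hx hm0.le; linarith) hq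
      have e : (1 + (x/m - 1)) = x/m := by ring
      rw [e, Real.div_rpow hx hm0.le] at this
      exact this
    have hkey : X - A ≥ q * (B * (x - m)) := by
      have h3 : (1 + q * (x/m - 1)) * A ≤ X := by
        have := mul_le_mul_of_nonneg_right hbern hA0.le
        rwa [div_mul_cancel₀ _ hA0.ne'] at this
      have e2 : x/m * A = B * x := by
        rw [← hBm, div_mul_eq_mul_div, div_eq_iff hm0.ne']; ring
      nlinarith
    have hdiv : B * (x - m) ≤ (X - A)/q := by
      rw [le_div_iff₀ hq0]; linarith
    have e : (X - 1)/q = (A - 1)/q + (X - A)/q := by ring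
    linarith

lemma jensen_psi {q : ℝ} (hq : 1 ≤ q) (w : ℝ → ℝ≥0∞) (g : ℝ → ℝ)
    (hw : Measurable w) (hg : Measurable g) (hgpos : ∀ u, 0 ≤ g u)
    (hW : ∫⁻ u, w u ≤ 1) {m : ℝ} (hm0 : 0 ≤ m)
    (hmean : ∫⁻ u, w u * ENNReal.ofReal (g u) = ENNReal.ofReal m) :
    ENNReal.ofReal (psi q m) ≤ ∫⁻ u, w u * ENNReal.ofReal (psi q (g u)) := by
  set d := Dq q m with hd
  have hd0 : 0 ≤ d := Dq_nonneg hq hm0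
  set c1 := ENNReal.ofReal (psi q m) with hc1
  set c2 := ENNReal.ofReal d with hc2
  set c3 := ENNReal.ofReal (d * m) with hc3
  set W := ∫⁻ u, w u with hWdef
  set T := ∫⁻ u, w u * ENNReal.ofReal (psi q (g u)) with hT
  have key : ∀ u, c1 + c2 * ENNReal.ofReal (g u) ≤ ENNReal.ofReal (psi q (g u)) + c3 := by
    intro u
    have hr := support_line (m := m) (x := g u) hq hm0 (hgpos u)
    calc c1 + c2 * ENNReal.ofReal (g u)
        = ENNReal.ofReal (psi q m + d * g u) := by
          rw [ENNReal.ofReal_add (psi_nonneg hq hm0) (mul_nonneg hd0 (hgpos u)),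
            ENNReal.ofReal_mul hd0]
      _ ≤ ENNReal.ofReal (psi q (g u) + d * m) := ENNReal.ofReal_le_ofReal hr
      _ = ENNReal.ofReal (psi q (g u)) + c3 := by
          rw [ENNReal.ofReal_add (psi_nonneg hq (hgpos u)) (mul_nonneg hd0 hm0)]
  have hmeas_gE : Measurable fun u => ENNReal.ofReal (g u) :=
    ENNReal.measurable_ofReal.comp hg
  have hmeas_pE : Measurable fun u => ENNReal.ofReal (psi q (g u)) :=
    ENNReal.measurable_ofReal.comp ((measurable_psi q).comp hg)
  have integ : W * c1 + c2 * ENNReal.ofReal m ≤ T + W * c3 := by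
    have h : (∫⁻ u, w u * (c1 + c2 * ENNReal.ofReal (g u))) ≤
        ∫⁻ u, w u * (ENNReal.ofReal (psi q (g u)) + c3) :=
      lintegral_mono (fun u => mul_le_mul_right (key u) (w u))
    calc W * c1 + c2 * ENNReal.ofReal m
        = ∫⁻ u, w u * (c1 + c2 * ENNReal.ofReal (g u)) := by
          rw [← hmean]
          simp_rw [mul_add]
          rw [lintegral_add_left (hw.mul_const c1)]
          congr 1
          · rw [lintegral_mul_const c1 hw]
          · simp_rw [show ∀ u, w u * (c2 * ENNReal.ofReal (g u))
              = c2 * (w u * ENNReal.ofReal (g u)) by intro u; ring]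
            rw [lintegral_const_mul c2 (f := fun u => w u * ENNReal.ofReal (g u)) (hw.mul hmeas_gE)]
      _ ≤ ∫⁻ u, w u * (ENNReal.ofReal (psi q (g u)) + c3) := h
      _ = T + W * c3 := by
          simp_rw [mul_add]
          rw [lintegral_add_right _ (hw.mul_const c3), lintegral_mul_const c3 hw]
  have hc2m : c2 * ENNReal.ofReal m = c3 := by
    rw [hc2, hc3, ENNReal.ofReal_mul hd0]
  rw [hc2m] at integ
  have hc1c3 : c1 ≤ c3 := ENNReal.ofReal_le_ofReal (psi_le_Dq_mul hq hm0)
  have hstep : c1 + c3 * W ≤ c1 * W + c3 := by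
    have hsplit : W + (1 - W) = 1 := add_tsub_cancel_of_le hW
    calc c1 + c3 * W = c1 * (W + (1 - W)) + c3 * W := by rw [hsplit, mul_one]
      _ = c1 * W + (c1 * (1 - W) + c3 * W) := by ring
      _ ≤ c1 * W + (c3 * (1 - W) + c3 * W) := by
          exact add_le_add_right (add_le_add_left (mul_le_mul_left hc1c3 _) _) _
      _ = c1 * W + c3 * ((1 - W) + W) := by ring
      _ = c1 * W + c3 := by rw [tsub_add_cancel_of_le hW, mul_one]
  have hfin : c3 * W ≠ ⊤ :=
    ENNReal.mul_ne_top ENNReal.ofReal_ne_top (lt_of_le_of_lt hW (by norm_num)).ne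
  have : c1 + c3 * W ≤ T + c3 * W := by
    calc c1 + c3 * W ≤ c1 * W + c3 := hstep
      _ = W * c1 + c3 := by rw [mul_comm]
      _ ≤ T + W * c3 := integ
      _ = T + c3 * W := by rw [mul_comm W c3]
  exact (ENNReal.add_le_add_iff_right hfin).mp this

lemma phi_div_le {q : ℝ} (hq : 1 ≤ q) {l l' : ℝ} (hl : 0 < l) (hll' : l ≤ l') (x : ℝ) :
    phi q (x / l') ≤ phi q (x / l) := by
  have hl' : 0 < l' := hl.trans_le hll'
  rw [← phi_abs q (x / l'), ← phi_abs q (x / l), abs_div, abs_div,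
    abs_of_pos hl, abs_of_pos hl']
  refine phi_mono hq (by positivity) ?_
  exact div_le_div_of_nonneg_left (abs_nonneg x) hl hll'

lemma PhiFun_anti {q : ℝ} (hq : 1 ≤ q) (ν : Measure ℝ) (g : ℝ → ℝ) {l l' : ℝ}
    (hl : 0 < l) (hll' : l ≤ l') :
    PhiFun q ν (fun s => g s / l') ≤ PhiFun q ν (fun s => g s / l) := by
  unfold PhiFun
  refine lintegral_mono fun v => lintegral_mono fun s => ENNReal.ofReal_le_ofReal ?_
  have e : ∀ t : ℝ, g s / t * v = g s * v / t := fun t => by ring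
  rw [e, e]
  exact phi_div_le hq hl hll' _

lemma levyNorm_lt_imp {q : ℝ} (hq : 1 ≤ q) (ν : Measure ℝ) (g : ℝ → ℝ) {t : ℝ}
    (h : levyNorm q ν g < ENNReal.ofReal t) :
    0 < t ∧ PhiFun q ν (fun s => g s / t) ≤ 1 := by
  obtain ⟨b, hb, hbt⟩ := sInf_lt_iff.mp h
  obtain ⟨l, ⟨hl0, hl⟩, rfl⟩ := hb
  have ht0 : 0 < t := by
    by_contra h0
    rw [ENNReal.ofReal_eq_zero.2 (le_of_not_gt h0)] at hbt
    exact ENNReal.not_lt_zero hbt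
  have hlt : l < t := by
    rwa [ENNReal.ofReal_lt_ofReal_iff ht0] at hbt
  exact ⟨ht0, le_trans (PhiFun_anti hq ν g hl0 hlt.le) hl⟩

lemma levyNorm_le_of_mem {q : ℝ} (ν : Measure ℝ) (g : ℝ → ℝ) {t : ℝ}
    (ht : 0 < t) (h : PhiFun q ν (fun s => g s / t) ≤ 1) :
    levyNorm q ν g ≤ ENNReal.ofReal t :=
  sInf_le ⟨t, ⟨ht, h⟩, rfl⟩

lemma levyNorm_eq_iInf {q : ℝ} (hq : 1 ≤ q) (ν : Measure ℝ) (g : ℝ → ℝ) :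
    levyNorm q ν g = ⨅ r : ℚ,
      if 0 < (r:ℝ) ∧ PhiFun q ν (fun s => g s / (r:ℝ)) ≤ 1 then ENNReal.ofReal (r:ℝ) else ⊤ := by
  apply le_antisymm
  · refine le_iInf fun r => ?_
    split_ifs with hc
    · exact levyNorm_le_of_mem ν g hc.1 hc.2
    · exact le_top
  · refine le_sInf fun b hb => ?_
    obtain ⟨l, ⟨hl0, hl⟩, rfl⟩ := hb
    refine ENNReal.le_of_forall_pos_le_add fun ε hε _ => ?_
    obtain ⟨r, hr1, hr2⟩ := exists_rat_btwn (lt_add_of_pos_right l (by exact_mod_cast hε : (0:ℝ) < ε))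
    have hcond : 0 < (r:ℝ) ∧ PhiFun q ν (fun s => g s / (r:ℝ)) ≤ 1 :=
      ⟨hl0.trans hr1, le_trans (PhiFun_anti hq ν g hl0 hr1.le) hl⟩
    calc (⨅ r' : ℚ, if 0 < (r':ℝ) ∧ PhiFun q ν (fun s => g s / (r':ℝ)) ≤ 1
            then ENNReal.ofReal (r':ℝ) else ⊤)
        ≤ ENNReal.ofReal (r:ℝ) := by
          refine iInf_le_of_le r ?_
          rw [if_pos hcond]
      _ ≤ ENNReal.ofReal (l + (ε:ℝ)) := ENNReal.ofReal_le_ofReal hr2.le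
      _ = ENNReal.ofReal l + ε := by
          rw [ENNReal.ofReal_add hl0.le (by positivity), ENNReal.ofReal_coe_nnreal]

lemma measurable_PhiFun_family {q : ℝ} (ν : Measure ℝ) [SFinite ν]
    {f : ℝ × ℝ → ℝ} (hf : Measurable f) (t : ℝ → ℝ) (ht : Measurable t) :
    Measurable fun u => PhiFun q ν (fun s => f (u, s) / t u) := by
  unfold PhiFun
  have hinner : Measurable fun p : ℝ × ℝ => ∫⁻ s : ℝ, ENNReal.ofReal
      (phi q (f (p.1, s) / t p.1 * p.2)) := by
    apply Measurable.lintegral_prod_right' (f := fun x : (ℝ × ℝ) × ℝ =>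
      ENNReal.ofReal (phi q (f (x.1.1, x.2) / t x.1.1 * x.1.2)))
    apply ENNReal.measurable_ofReal.comp
    apply (measurable_phi q).comp
    have hfm : Measurable fun x : (ℝ × ℝ) × ℝ => f (x.1.1, x.2) :=
      hf.comp (measurable_fst.fst.prodMk measurable_snd)
    exact (hfm.div (ht.comp measurable_fst.fst)).mul measurable_fst.snd
  exact Measurable.lintegral_prod_right' (f := fun x : ℝ × ℝ => ∫⁻ s : ℝ,
    ENNReal.ofReal (phi q (f (x.1, s) / t x.1 * x.2))) hinner

lemma measurable_levyNorm_family {q : ℝ} (hq : 1 ≤ q) (ν : Measure ℝ) [SFinite ν]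
    {f : ℝ × ℝ → ℝ} (hf : Measurable f) :
    Measurable fun u => levyNorm q ν (fun s => f (u, s)) := by
  have e : (fun u => levyNorm q ν (fun s => f (u, s))) = fun u => ⨅ r : ℚ,
      if 0 < (r:ℝ) ∧ PhiFun q ν (fun s => f (u, s) / (r:ℝ)) ≤ 1
      then ENNReal.ofReal (r:ℝ) else ⊤ := by
    funext u; exact levyNorm_eq_iInf hq ν _
  rw [e]
  refine Measurable.iInf fun r => ?_
  have hset : MeasurableSet {u : ℝ | 0 < (r:ℝ) ∧
      PhiFun q ν (fun s => f (u, s) / (r:ℝ)) ≤ 1} := by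
    have : {u : ℝ | 0 < (r:ℝ) ∧ PhiFun q ν (fun s => f (u, s) / (r:ℝ)) ≤ 1}
        = {u : ℝ | 0 < (r:ℝ)} ∩ {u : ℝ | PhiFun q ν (fun s => f (u, s) / (r:ℝ)) ≤ 1} := by
      ext u; simp [Set.mem_setOf_eq, Set.mem_inter_iff]
    rw [this]
    refine MeasurableSet.inter (MeasurableSet.const _) ?_
    exact measurableSet_le (measurable_PhiFun_family ν hf (fun _ => (r:ℝ)) measurable_const)
      measurable_const
  exact Measurable.ite hset measurable_const measurable_const

lemma levy_sigmaFinite (ν : Measure ℝ) (hν0 : ν {0} = 0)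
    (hν : (∫⁻ x : ℝ, ENNReal.ofReal (min 1 (x ^ 2)) ∂ν) < ⊤) : SigmaFinite ν := by
  refine ⟨⟨⟨fun n => {x : ℝ | 1/(n+1) ≤ |x|} ∪ {0}, fun n => trivial, fun n => ?_, ?_⟩⟩⟩
  · -- finite
    set c : ℝ := 1/(n+1) with hc
    have hc0 : (0:ℝ) < c := by positivity
    have hA : MeasurableSet {x : ℝ | c ≤ |x|} :=
      measurableSet_le measurable_const measurable_id.abs
    have hbound : ENNReal.ofReal (min 1 (c^2)) * ν {x : ℝ | c ≤ |x|}
        ≤ ∫⁻ x : ℝ, ENNReal.ofReal (min 1 (x ^ 2)) ∂ν := by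
      calc ENNReal.ofReal (min 1 (c^2)) * ν {x : ℝ | c ≤ |x|}
          = ∫⁻ _ in {x : ℝ | c ≤ |x|}, ENNReal.ofReal (min 1 (c^2)) ∂ν := by
            rw [setLIntegral_const]
        _ ≤ ∫⁻ x in {x : ℝ | c ≤ |x|}, ENNReal.ofReal (min 1 (x ^ 2)) ∂ν := by
            refine setLIntegral_mono (by fun_prop) fun x hx => ?_
            refine ENNReal.ofReal_le_ofReal (min_le_min le_rfl ?_)
            have : c ≤ |x| := hx
            nlinarith [abs_nonneg x, sq_abs x]
        _ ≤ ∫⁻ x : ℝ, ENNReal.ofReal (min 1 (x ^ 2)) ∂ν :=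
            setLIntegral_le_lintegral _ _
    have hfin : ν {x : ℝ | c ≤ |x|} < ⊤ := by
      by_contra htop
      push_neg at htop
      rw [top_le_iff.mp htop, ENNReal.mul_top] at hbound
      · exact absurd (lt_of_le_of_lt hbound hν) (lt_irrefl _)
      · simp only [ne_eq, ENNReal.ofReal_eq_zero, not_le]
        positivity
    calc ν ({x : ℝ | c ≤ |x|} ∪ {0}) ≤ ν {x : ℝ | c ≤ |x|} + ν {0} := measure_union_le _ _
      _ = ν {x : ℝ | c ≤ |x|} := by rw [hν0, add_zero]
      _ < ⊤ := hfin
  · -- spanning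
    ext x
    simp only [Set.mem_iUnion, Set.mem_union, Set.mem_setOf_eq, Set.mem_singleton_iff,
      Set.mem_univ, iff_true]
    rcases eq_or_ne x 0 with h | h
    · exact ⟨0, Or.inr h⟩
    · obtain ⟨n, hn⟩ := exists_nat_one_div_lt (abs_pos.mpr h)
      exact ⟨n, Or.inl (by exact_mod_cast hn.le)⟩

/-- Lemma 4.12 (deterministic version): a Minkowski-type integral inequality for
the Orlicz-type functional `‖·‖_{q,ν}`. -/
theorem stmt_11 :
    ∀ q : ℝ, 1 ≤ q → ∃ C > (0 : ℝ),
      ∀ ν : Measure ℝ, ν {0} = 0 →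
        (∫⁻ x : ℝ, ENNReal.ofReal (min 1 (x ^ 2)) ∂ν) < ⊤ →
        ∀ f : ℝ × ℝ → ℝ, Measurable f →
          levyNorm q ν
              (fun s => (∫⁻ u : ℝ, ENNReal.ofReal |f (u, s)|).toReal) ≤
            ENNReal.ofReal C * ∫⁻ u : ℝ, levyNorm q ν (fun s => f (u, s)) := by
  intro q hq
  refine ⟨2, by norm_num, ?_⟩
  intro ν hν0 hνint f hf
  have hSF : SigmaFinite ν := levy_sigmaFinite ν hν0 hνint
  set N : ℝ → ℝ≥0∞ := fun u => levyNorm q ν (fun s => f (u, s)) with hN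
  have hNmeas : Measurable N := measurable_levyNorm_family hq ν hf
  set I : ℝ≥0∞ := ∫⁻ u, N u with hI
  set F : ℝ → ℝ := fun s => (∫⁻ u : ℝ, ENNReal.ofReal |f (u, s)|).toReal with hFdef
  show levyNorm q ν F ≤ ENNReal.ofReal 2 * I
  rcases eq_top_or_lt_top I with hItop | hIfin
  · rw [hItop, ENNReal.mul_top (by norm_num)]; exact le_top
  have key : ∀ ρ : ℝ, I < ENNReal.ofReal ρ → levyNorm q ν F ≤ ENNReal.ofReal (2 * ρ) := by
    intro ρ hρ
    have hρ0 : 0 < ρ := ENNReal.ofReal_pos.mp (lt_of_le_of_lt (zero_le (a := I)) hρ)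
    have hρne : ENNReal.ofReal ρ ≠ 0 := (ENNReal.ofReal_pos.mpr hρ0).ne'
    -- choose δ
    set e : ℝ → ℝ := fun u => (1 + u^2)⁻¹ with hedef
    have hemeas : Measurable e := (measurable_const.add (measurable_id.pow_const 2)).inv
    have hepos : ∀ u : ℝ, 0 < e u := fun u => by positivity
    set E : ℝ≥0∞ := ∫⁻ u : ℝ, ENNReal.ofReal (e u) with hE
    have hEfin : E < ⊤ := by
      rw [hE, ← ofReal_integral_eq_lintegral_ofReal integrable_inv_one_add_sq
        (Filter.Eventually.of_forall fun u => (hepos u).le)]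
      exact ENNReal.ofReal_lt_top
    have hIρ : I.toReal < ρ := (ENNReal.lt_ofReal_iff_toReal_lt hIfin.ne).mp hρ
    set c : ℝ := (ρ - I.toReal)/2 with hcdef
    have hc0 : 0 < c := by simp only [hcdef]; linarith
    set δ : ℝ := c / (E.toReal + 1) with hδdef
    have hδ0 : 0 < δ := by
      have := ENNReal.toReal_nonneg (a := E); positivity
    have hδE : ENNReal.ofReal δ * E ≤ ENNReal.ofReal c := by
      rw [← ENNReal.ofReal_toReal hEfin.ne, ← ENNReal.ofReal_mul hδ0.le]
      apply ENNReal.ofReal_le_ofReal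
      rw [hδdef, div_mul_eq_mul_div, div_le_iff₀ (by positivity)]
      have h1 : 0 ≤ E.toReal := ENNReal.toReal_nonneg
      nlinarith
    set M : ℝ → ℝ≥0∞ := fun u => N u + ENNReal.ofReal (δ * e u) with hM
    have hMmeas : Measurable M :=
      hNmeas.add (hemeas.const_mul δ).ennreal_ofReal
    have hMne0 : ∀ u, M u ≠ 0 := fun u => by
      simp only [hM]
      intro h
      rw [add_eq_zero] at h
      have := h.2
      rw [ENNReal.ofReal_eq_zero] at this
      nlinarith [hepos u, hδ0]
    have hMint : ∫⁻ u, M u < ENNReal.ofReal ρ := by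
      have h1 : ∫⁻ u, M u = I + ENNReal.ofReal δ * E := by
        rw [hM, lintegral_add_left hNmeas]
        congr 1
        simp_rw [ENNReal.ofReal_mul hδ0.le]
        rw [lintegral_const_mul _ hemeas.ennreal_ofReal]
      rw [h1]
      calc I + ENNReal.ofReal δ * E ≤ I + ENNReal.ofReal c := add_le_add_right hδE I
        _ = ENNReal.ofReal (I.toReal + c) := by
            rw [ENNReal.ofReal_add ENNReal.toReal_nonneg hc0.le, ENNReal.ofReal_toReal hIfin.ne]
        _ < ENNReal.ofReal ρ := by
            rw [ENNReal.ofReal_lt_ofReal_iff hρ0]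
            simp only [hcdef]; linarith
    set w : ℝ → ℝ≥0∞ := fun u => M u * (ENNReal.ofReal ρ)⁻¹ with hw
    have hwmeas : Measurable w := hMmeas.mul_const _
    have hW : ∫⁻ u, w u ≤ 1 := by
      rw [hw]
      rw [lintegral_mul_const _ hMmeas]
      calc (∫⁻ u, M u) * (ENNReal.ofReal ρ)⁻¹ ≤ ENNReal.ofReal ρ * (ENNReal.ofReal ρ)⁻¹ :=
            mul_le_mul_left hMint.le _
        _ = 1 := ENNReal.mul_inv_cancel hρne ENNReal.ofReal_ne_top
    have haeM : ∀ᵐ u : ℝ, M u < ⊤ := by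
      filter_upwards [ae_lt_top hNmeas hIfin.ne] with u hu
      exact ENNReal.add_lt_top.mpr ⟨hu, ENNReal.ofReal_lt_top⟩
    have hae : ∀ᵐ u : ℝ, PhiFun q ν (fun s => f (u, s) / (M u).toReal) ≤ 1 := by
      filter_upwards [ae_lt_top hNmeas hIfin.ne] with u hu
      have hMu_fin : M u < ⊤ := ENNReal.add_lt_top.mpr ⟨hu, ENNReal.ofReal_lt_top⟩
      have hMu_lt : N u < M u := by
        rw [hM]
        exact ENNReal.lt_add_right hu.ne
          (by rw [ne_eq, ENNReal.ofReal_eq_zero, not_le]; positivity)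
      have hlt : levyNorm q ν (fun s => f (u, s)) < ENNReal.ofReal ((M u).toReal) := by
        rw [ENNReal.ofReal_toReal hMu_fin.ne]; exact hMu_lt
      exact (levyNorm_lt_imp hq ν _ hlt).2
    -- master pointwise bound
    have master : ∀ s v : ℝ, ENNReal.ofReal (phi q (F s / (2*ρ) * v)) ≤
        ∫⁻ u : ℝ, w u * ENNReal.ofReal (phi q (f (u, s) / (M u).toReal * v)) := by
      intro s v
      have hfs : Measurable fun u : ℝ => f (u, s) :=
        hf.comp (measurable_id.prodMk measurable_const)
      by_cases hAs : (∫⁻ u : ℝ, ENNReal.ofReal |f (u, s)|) = ⊤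
      · have hF0 : F s = 0 := by simp [hFdef, hAs]
        rw [hF0]
        norm_num [phi_zero]
      · have hFs0 : 0 ≤ F s := ENNReal.toReal_nonneg
        have hFsE : ENNReal.ofReal (F s) = ∫⁻ u : ℝ, ENNReal.ofReal |f (u, s)| := by
          rw [hFdef]; exact ENNReal.ofReal_toReal hAs
        set m : ℝ := F s * |v| / ρ with hm
        have hm0 : 0 ≤ m := by positivity
        set g : ℝ → ℝ := fun u => |f (u, s) * v| / (M u).toReal with hg
        have hgmeas : Measurable g :=
          (hfs.mul_const v).abs.div (ENNReal.measurable_toReal.comp hMmeas)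
        have hgpos : ∀ u, 0 ≤ g u := fun u => div_nonneg (abs_nonneg _) ENNReal.toReal_nonneg
        have stepA : ENNReal.ofReal (phi q (F s / (2*ρ) * v)) ≤ ENNReal.ofReal (psi q m) := by
          apply ENNReal.ofReal_le_ofReal
          have e1 : phi q (F s / (2*ρ) * v) = phi q (F s * |v| / (2*ρ)) := by
            rw [← phi_abs q (F s / (2*ρ) * v)]
            congr 1
            rw [abs_mul, abs_div, abs_of_nonneg hFs0, abs_of_pos (by positivity : (0:ℝ) < 2*ρ)]
            ring
          rw [e1]
          have hA := phi_le_psi_two hq (x := F s * |v| / (2*ρ)) (by positivity)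
          have e2 : 2 * (F s * |v| / (2*ρ)) = m := by
            rw [hm]; field_simp
          rwa [e2] at hA
        have hmean : ∫⁻ u, w u * ENNReal.ofReal (g u) = ENNReal.ofReal m := by
          have hptw : ∀ᵐ u : ℝ, w u * ENNReal.ofReal (g u)
              = ENNReal.ofReal |f (u, s) * v| * (ENNReal.ofReal ρ)⁻¹ := by
            filter_upwards [haeM] with u hMu
            have ht0 : 0 < (M u).toReal := ENNReal.toReal_pos (hMne0 u) hMu.ne
            have e3 : ENNReal.ofReal (g u) = ENNReal.ofReal |f (u, s) * v| * (M u)⁻¹ := by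
              rw [hg]
              simp only []
              rw [ENNReal.ofReal_div_of_pos ht0, ENNReal.ofReal_toReal hMu.ne, div_eq_mul_inv]
            rw [e3, hw]
            rw [show M u * (ENNReal.ofReal ρ)⁻¹ * (ENNReal.ofReal |f (u, s) * v| * (M u)⁻¹)
              = ENNReal.ofReal |f (u, s) * v| * (ENNReal.ofReal ρ)⁻¹ * (M u * (M u)⁻¹) by ring]
            rw [ENNReal.mul_inv_cancel (hMne0 u) hMu.ne, mul_one]
          rw [lintegral_congr_ae hptw,
            lintegral_mul_const _ (hfs.mul_const v).abs.ennreal_ofReal]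
          have e4 : ∫⁻ u : ℝ, ENNReal.ofReal |f (u, s) * v| = ENNReal.ofReal (F s * |v|) := by
            simp_rw [abs_mul, ENNReal.ofReal_mul (abs_nonneg _)]
            rw [lintegral_mul_const _ hfs.abs.ennreal_ofReal, ← hFsE,
              ← ENNReal.ofReal_mul hFs0]
          rw [e4, hm, ENNReal.ofReal_div_of_pos hρ0, div_eq_mul_inv]
        have stepB := jensen_psi hq w g hwmeas hgmeas hgpos hW hm0 hmean
        have stepC : (∫⁻ u : ℝ, w u * ENNReal.ofReal (psi q (g u))) ≤
            ∫⁻ u : ℝ, w u * ENNReal.ofReal (phi q (f (u, s) / (M u).toReal * v)) := by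
          apply lintegral_mono_ae
          filter_upwards [haeM] with u hMu
          apply mul_le_mul_right
          have ht0 : 0 < (M u).toReal := ENNReal.toReal_pos (hMne0 u) hMu.ne
          have e5 : phi q (f (u, s) / (M u).toReal * v) = phi q (g u) := by
            have egu : g u = |f (u, s) * v| / (M u).toReal := rfl
            rw [egu, ← phi_abs q (f (u, s) / (M u).toReal * v)]
            congr 1
            rw [abs_mul, abs_mul, abs_div, abs_of_pos ht0]
            ring
          rw [e5]
          exact ENNReal.ofReal_le_ofReal (psi_le_phi hq (hgpos u))
        exact le_trans stepA (le_trans stepB stepC)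
    -- conclude
    apply levyNorm_le_of_mem ν F (by positivity)
    unfold PhiFun
    calc ∫⁻ v : ℝ, (∫⁻ s : ℝ, ENNReal.ofReal (phi q (F s / (2*ρ) * v))) ∂ν
        ≤ ∫⁻ v : ℝ, (∫⁻ s : ℝ, ∫⁻ u : ℝ,
            w u * ENNReal.ofReal (phi q (f (u, s) / (M u).toReal * v))) ∂ν :=
          lintegral_mono fun v => lintegral_mono fun s => master s v
      _ = ∫⁻ u : ℝ, w u * PhiFun q ν (fun s => f (u, s) / (M u).toReal) := by
          have hcore : Measurable fun p : ℝ × ℝ => f p / (M p.1).toReal :=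
            hf.div ((ENNReal.measurable_toReal.comp hMmeas).comp measurable_fst)
          have swap1 : ∀ v : ℝ, (∫⁻ s : ℝ, ∫⁻ u : ℝ,
              w u * ENNReal.ofReal (phi q (f (u, s) / (M u).toReal * v)))
              = ∫⁻ u : ℝ, ∫⁻ s : ℝ,
              w u * ENNReal.ofReal (phi q (f (u, s) / (M u).toReal * v)) := by
            intro v
            apply lintegral_lintegral_swap
            apply Measurable.aemeasurable
            exact (hwmeas.comp measurable_snd).mul
              (((measurable_phi q).comp
                ((hcore.comp (measurable_snd.prodMk measurable_fst)).mul_const v)).ennreal_ofReal)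
          simp_rw [swap1]
          have swap2 : (∫⁻ v : ℝ, (∫⁻ u : ℝ, ∫⁻ s : ℝ,
              w u * ENNReal.ofReal (phi q (f (u, s) / (M u).toReal * v))) ∂ν)
              = ∫⁻ u : ℝ, ∫⁻ v : ℝ, (∫⁻ s : ℝ,
              w u * ENNReal.ofReal (phi q (f (u, s) / (M u).toReal * v))) ∂ν := by
            apply lintegral_lintegral_swap
            apply Measurable.aemeasurable
            apply Measurable.lintegral_prod_right' (f := fun pp : (ℝ × ℝ) × ℝ =>
              w pp.1.2 * ENNReal.ofReal (phi q (f (pp.1.2, pp.2) / (M pp.1.2).toReal * pp.1.1)))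
            exact (hwmeas.comp measurable_fst.snd).mul
              (((measurable_phi q).comp
                ((hcore.comp (measurable_fst.snd.prodMk measurable_snd)).mul
                  measurable_fst.fst)).ennreal_ofReal)
          rw [swap2]
          refine lintegral_congr fun u => ?_
          have hmeas_s : ∀ v : ℝ, Measurable fun s : ℝ =>
              ENNReal.ofReal (phi q (f (u, s) / (M u).toReal * v)) := fun v =>
            ((measurable_phi q).comp
              ((hcore.comp measurable_prodMk_left).mul_const v)).ennreal_ofReal
          have e1 : ∀ v : ℝ, (∫⁻ s : ℝ,
              w u * ENNReal.ofReal (phi q (f (u, s) / (M u).toReal * v)))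
              = w u * ∫⁻ s : ℝ, ENNReal.ofReal (phi q (f (u, s) / (M u).toReal * v)) := fun v =>
            lintegral_const_mul _ (hmeas_s v)
          simp_rw [e1]
          rw [lintegral_const_mul _ ?_]
          · rfl
          · apply Measurable.lintegral_prod_right' (f := fun pp : ℝ × ℝ =>
              ENNReal.ofReal (phi q (f (u, pp.2) / (M u).toReal * pp.1)))
            exact ((measurable_phi q).comp
              ((hcore.comp (measurable_prodMk_left.comp measurable_snd)).mul
                measurable_fst)).ennreal_ofReal
      _ ≤ ∫⁻ u : ℝ, w u * 1 :=
          lintegral_mono_ae (hae.mono fun u hu => mul_le_mul_right hu _)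
      _ = ∫⁻ u : ℝ, w u := by simp
      _ ≤ 1 := hW
  -- conclude from key
  refine ENNReal.le_of_forall_pos_le_add fun ε hε h2I => ?_
  have hεR : (0:ℝ) < (ε:ℝ) := hε
  have h1 : I < ENNReal.ofReal (I.toReal + ε/2) := by
    rw [ENNReal.ofReal_add ENNReal.toReal_nonneg (by positivity),
      ENNReal.ofReal_toReal hIfin.ne]
    exact ENNReal.lt_add_right hIfin.ne
      (by rw [ne_eq, ENNReal.ofReal_eq_zero, not_le]; positivity)
  calc levyNorm q ν F ≤ ENNReal.ofReal (2 * (I.toReal + ε/2)) := key _ h1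
    _ = ENNReal.ofReal (2 * I.toReal) + ENNReal.ofReal (ε:ℝ) := by
        rw [← ENNReal.ofReal_add (by positivity) (by positivity)]
        ring_nf
    _ = ENNReal.ofReal 2 * I + ε := by
        rw [ENNReal.ofReal_mul (by norm_num), ENNReal.ofReal_toReal hIfin.ne,
          ENNReal.ofReal_coe_nnreal]

end
end

section
/- Assume: ν is a Lévy measure on ℝ with ∫_{|x|>1} |x| ν(dx) < ∞, there exist θ ∈ (0, 2] and C₀ > 0 with ν({x : |x| ≥ t}) ≤ C₀ t^{−θ} for all t ≥ 1, and there is β ∈ [0, 2) such that ∫_{|x|≤1} |x|^r ν(dx) < ∞ for every r > β; σ : ℝ × Ω → ℝ is a jointly measurable process on a probability space (Ω, F, P) with |σ_s(ω)| ≤ M for all s ∈ [−δ, ∞), ω ∈ Ω, for some M > 0; there exist ρ ∈ (0, min(1, θ)] and β' > β with β' ≥ 1 such that E[ ∫_ℝ max(|H_s|^ρ, |H_s|^{β'}) ds ] < ∞, where H_s = g^{(k)}(−s) σ_s 1_{(−∞,−δ]}(s); and α > k − 1/max(β, 1). Then for every t > 0 one has ∫_0^t E[ Φ_{1,ν}(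 f_t(u, ·) ) ] du < ∞, where f_t(u, s)(ω) = g^{(k)}(u − s) σ_s(ω) 1_{[0,t]}(u) 1_{(−∞,u)}(s); consequently E[ ∫_0^t ‖ f_t(u, ·) ‖_{1,ν} du ] < ∞. -/
open MeasureTheory Set
open scoped ENNReal

noncomputable section

/-- The random field `f_t(u, s)(ω) = g^{(k)}(u−s) σ_s(ω) 1_{[0,t]}(u) 1_{(−∞,u)}(s)`. -/
def ftField {Ω : Type*} (g : ℝ → ℝ) (k : ℕ) (σ : ℝ → Ω → ℝ) (t u s : ℝ) (ω : Ω) : ℝ :=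
  (if 0 ≤ u ∧ u ≤ t then (1 : ℝ) else 0) * (if s < u then (1 : ℝ) else 0) *
    (iteratedDeriv k g (u - s) * σ s ω)

lemma sq_le_rpow_of_le_one {z c : ℝ} (hz : 0 ≤ z) (hz1 : z ≤ 1) (hc : 0 < c) (hc2 : c ≤ 2) :
    z ^ 2 ≤ z ^ c := by
  rcases eq_or_lt_of_le hz with h0 | h0
  · rw [← h0]; simp [Real.zero_rpow (ne_of_gt hc)]
  · rw [← Real.rpow_two]
    exact Real.rpow_le_rpow_of_exponent_ge h0 hz1 hc2

lemma phi_one_nonneg (y : ℝ) : 0 ≤ phi 1 y := by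
  unfold phi; split
  · positivity
  · positivity

lemma phi_one_le_abs (y : ℝ) : phi 1 y ≤ |y| := by
  unfold phi; split
  · nlinarith [abs_nonneg y, sq_abs y, (by assumption : |y| ≤ 1)]
  · rw [Real.rpow_one]

lemma phi_one_le_rpow {r : ℝ} (h1 : 1 ≤ r) (h2 : r ≤ 2) (y : ℝ) : phi 1 y ≤ |y| ^ r := by
  unfold phi; split
  · rw [← sq_abs y]
    exact sq_le_rpow_of_le_one (abs_nonneg y) (by assumption) (by linarith) h2
  · rename_i h
    calc |y| ^ (1:ℝ) ≤ |y| ^ r :=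
          Real.rpow_le_rpow_of_exponent_le (by push_neg at h; linarith) h1

/-- key pointwise bound for the unbounded region -/
lemma phi_mul_le {ρ β' : ℝ} (hρ0 : 0 < ρ) (hρ1 : ρ ≤ 1) (hβ'1 : 1 ≤ β') (a x : ℝ) :
    phi 1 (a * x) ≤ max (|a| ^ ρ) (|a| ^ β') *
      (if |x| ≤ 1 then |x| ^ min β' 2 else |x|) := by
  set b := min β' 2 with hbdef
  have hb1 : 1 ≤ b := le_min hβ'1 one_le_two
  have hb2 : b ≤ 2 := min_le_right _ _
  have hbβ' : b ≤ β' := min_le_left _ _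
  have hmax0 : 0 ≤ max (|a| ^ ρ) (|a| ^ β') :=
    le_max_of_le_left (Real.rpow_nonneg (abs_nonneg a) _)
  rcases eq_or_lt_of_le (abs_nonneg a) with ha0 | ha0
  · have : a = 0 := by simpa using ha0.symm
    subst this
    have : phi 1 (0 * x) = 0 := by norm_num [phi]
    rw [this]
    apply mul_nonneg hmax0
    split
    · exact Real.rpow_nonneg (abs_nonneg x) _
    · exact abs_nonneg x
  rcases eq_or_lt_of_le (abs_nonneg x) with hx0 | hx0
  · have : x = 0 := by simpa using hx0.symm
    subst this
    have : phi 1 (a * 0) = 0 := by norm_num [phi]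
    rw [this]
    apply mul_nonneg hmax0
    split
    · exact Real.rpow_nonneg (abs_nonneg 0) _
    · exact abs_nonneg 0
  by_cases hx : |x| ≤ 1
  · rw [if_pos hx]
    by_cases ha : |a| ≤ 1
    · -- |a| ≤ 1 : use ρ branch
      have hax : |a * x| ≤ 1 := by
        rw [abs_mul]; calc |a| * |x| ≤ 1 * 1 := mul_le_mul ha hx (abs_nonneg x) zero_le_one
          _ = 1 := by norm_num
      have h1 : phi 1 (a * x) = (a * x) ^ 2 := if_pos hax
      rw [h1]
      have e1 : (a*x)^2 = |a| ^ (2:ℕ) * |x| ^ (2:ℕ) := by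
        rw [← sq_abs (a*x), abs_mul, mul_pow]
      rw [e1]
      have h2 : |a| ^ (2:ℕ) ≤ |a| ^ ρ :=
        sq_le_rpow_of_le_one (abs_nonneg a) ha (by linarith) (by linarith)
      have h3 : |x| ^ (2:ℕ) ≤ |x| ^ b :=
        sq_le_rpow_of_le_one (abs_nonneg x) hx (by linarith) hb2
      calc |a| ^ (2:ℕ) * |x| ^ (2:ℕ) ≤ |a| ^ ρ * |x| ^ b :=
            mul_le_mul h2 h3 (pow_nonneg (abs_nonneg x) _)
              (Real.rpow_nonneg (abs_nonneg a) _)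
        _ ≤ max (|a| ^ ρ) (|a| ^ β') * |x| ^ b :=
            mul_le_mul_of_nonneg_right (le_max_left _ _)
              (Real.rpow_nonneg (abs_nonneg x) _)
    · push_neg at ha
      -- |a| > 1, |x| ≤ 1
      have key : phi 1 (a*x) ≤ |a*x| ^ b := by
        by_cases hax : |a*x| ≤ 1
        · rw [phi, if_pos hax, ← sq_abs (a*x)]
          exact sq_le_rpow_of_le_one (abs_nonneg _) hax (by linarith) hb2
        · push_neg at hax
          rw [phi, if_neg (not_le.mpr hax), Real.rpow_one]
          calc |a*x| = |a*x| ^ (1:ℝ) := (Real.rpow_one _).symm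
            _ ≤ |a*x| ^ b := Real.rpow_le_rpow_of_exponent_le hax.le hb1
      have e1 : |a*x| ^ b = |a| ^ b * |x| ^ b := by
        rw [abs_mul, Real.mul_rpow (abs_nonneg a) (abs_nonneg x)]
      have h2 : |a| ^ b ≤ |a| ^ β' := Real.rpow_le_rpow_of_exponent_le ha.le hbβ'
      calc phi 1 (a*x) ≤ |a| ^ b * |x| ^ b := by rw [← e1]; exact key
        _ ≤ |a| ^ β' * |x| ^ b := mul_le_mul_of_nonneg_right h2
            (Real.rpow_nonneg (abs_nonneg x) _)
        _ ≤ max (|a| ^ ρ) (|a| ^ β') * |x| ^ b :=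
            mul_le_mul_of_nonneg_right (le_max_right _ _)
              (Real.rpow_nonneg (abs_nonneg x) _)
  · rw [if_neg hx]
    push_neg at hx
    have h1 : phi 1 (a*x) ≤ |a| * |x| := by
      calc phi 1 (a*x) ≤ |a*x| := phi_one_le_abs _
        _ = |a| * |x| := abs_mul a x
    have h2 : |a| ≤ max (|a| ^ ρ) (|a| ^ β') := by
      by_cases ha : |a| ≤ 1
      · calc |a| = |a| ^ (1:ℝ) := (Real.rpow_one _).symm
          _ ≤ |a| ^ ρ := Real.rpow_le_rpow_of_exponent_ge ha0 ha hρ1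
          _ ≤ _ := le_max_left _ _
      · push_neg at ha
        calc |a| = |a| ^ (1:ℝ) := (Real.rpow_one _).symm
          _ ≤ |a| ^ β' := Real.rpow_le_rpow_of_exponent_le ha.le hβ'1
          _ ≤ _ := le_max_right _ _
    calc phi 1 (a*x) ≤ |a| * |x| := h1
      _ ≤ max (|a| ^ ρ) (|a| ^ β') * |x| :=
          mul_le_mul_of_nonneg_right h2 (abs_nonneg x)


noncomputable section

lemma phi_one_div_le {l : ℝ} (hl : 1 ≤ l) (y : ℝ) : phi 1 (y / l) ≤ (1/l) * phi 1 y := by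
  have hl0 : 0 < l := lt_of_lt_of_le one_pos hl
  have habs : |y / l| = |y| / l := by rw [abs_div, abs_of_pos hl0]
  by_cases h1 : |y / l| ≤ 1
  · rw [phi, if_pos h1]
    by_cases h2 : |y| ≤ 1
    · rw [phi, if_pos h2, div_pow, show (1/l) * y^2 = y^2/l by ring]
      have h3 : l ≤ l^2 := by nlinarith
      gcongr
    · rw [phi, if_neg h2, Real.rpow_one]
      push_neg at h2
      have h5 : |y|/l ≤ 1 := by rwa [habs] at h1
      have h4 : 0 ≤ |y|/l := div_nonneg (abs_nonneg y) hl0.le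
      have e : (y/l)^2 = (|y|/l)^2 := by rw [← sq_abs (y/l), habs]
      rw [e]
      calc (|y|/l)^2 ≤ |y|/l := by nlinarith
        _ = (1/l)*|y| := by ring
  · push_neg at h1
    rw [phi, if_neg (not_le.mpr h1), Real.rpow_one, habs]
    have hy1 : ¬ |y| ≤ 1 := by
      intro h
      have : |y/l| ≤ 1 := by
        rw [habs]
        calc |y|/l ≤ |y| := div_le_self (abs_nonneg y) hl
          _ ≤ 1 := h
      exact absurd this (not_le.mpr h1)
    rw [phi, if_neg hy1, Real.rpow_one]
    exact le_of_eq (by ring)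

lemma levyNorm_le_one_add (ν : Measure ℝ) (F : ℝ → ℝ) :
    levyNorm 1 ν F ≤ 1 + PhiFun 1 ν F := by
  by_cases hΦ : PhiFun 1 ν F = ⊤
  · rw [hΦ]; simp
  · set Φ := PhiFun 1 ν F with hΦdef
    set l : ℝ := Φ.toReal + 1 with hldef
    have hΦ0 : 0 ≤ Φ.toReal := ENNReal.toReal_nonneg
    have hl1 : 1 ≤ l := by rw [hldef]; linarith
    have hl0 : 0 < l := by linarith
    have key : PhiFun 1 ν (fun s => F s / l) ≤ 1 := by
      have hb : PhiFun 1 ν (fun s => F s / l) ≤ ENNReal.ofReal (1/l) * Φ := by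
        rw [hΦdef]; unfold PhiFun
        calc ∫⁻ x, (∫⁻ s, ENNReal.ofReal (phi 1 (F s / l * x))) ∂ν
            ≤ ∫⁻ x, (∫⁻ s, ENNReal.ofReal (1/l) * ENNReal.ofReal (phi 1 (F s * x))) ∂ν := by
              refine lintegral_mono fun x => lintegral_mono fun s => ?_
              rw [← ENNReal.ofReal_mul (by positivity : (0:ℝ) ≤ 1/l)]
              apply ENNReal.ofReal_le_ofReal
              rw [div_mul_eq_mul_div]
              exact phi_one_div_le hl1 (F s * x)
          _ = ENNReal.ofReal (1/l) * ∫⁻ x, (∫⁻ s, ENNReal.ofReal (phi 1 (F s * x))) ∂ν := by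
              simp_rw [lintegral_const_mul' (ENNReal.ofReal (1/l)) _ ENNReal.ofReal_ne_top]
      calc PhiFun 1 ν (fun s => F s / l) ≤ ENNReal.ofReal (1/l) * Φ := hb
        _ = ENNReal.ofReal (1/l) * ENNReal.ofReal Φ.toReal := by rw [ENNReal.ofReal_toReal hΦ]
        _ = ENNReal.ofReal (Φ.toReal / l) := by
            rw [← ENNReal.ofReal_mul (by positivity : (0:ℝ) ≤ 1/l), one_div_mul_eq_div]
        _ ≤ 1 := by
            rw [← ENNReal.ofReal_one]
            apply ENNReal.ofReal_le_ofReal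
            rw [div_le_one hl0]; linarith
    have hmem : ENNReal.ofReal l ∈ ((fun l : ℝ => ENNReal.ofReal l) ''
        {l : ℝ | 0 < l ∧ PhiFun 1 ν (fun s => F s / l) ≤ 1}) := ⟨l, ⟨hl0, key⟩, rfl⟩
    calc levyNorm 1 ν F ≤ ENNReal.ofReal l := sInf_le hmem
      _ = ENNReal.ofReal Φ.toReal + ENNReal.ofReal 1 := by
          rw [← ENNReal.ofReal_add hΦ0 zero_le_one]
      _ = Φ + 1 := by rw [ENNReal.ofReal_toReal hΦ, ENNReal.ofReal_one]
      _ = 1 + Φ := add_comm _ _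


lemma lint_rpow_Ioc {p T : ℝ} (hp : -1 < p) :
    ∫⁻ v in Set.Ioc (0:ℝ) T, ENNReal.ofReal (v ^ p) < ⊤ := by
  rcases le_or_gt T 0 with hT | hT
  · rw [Set.Ioc_eq_empty (by exact fun h => absurd hT (not_le.mpr h))]
    simp
  · have h1 : IntervalIntegrable (fun v : ℝ => v ^ p) volume 0 T :=
      intervalIntegral.intervalIntegrable_rpow' hp
    have h2 : IntegrableOn (fun v : ℝ => v ^ p) (Set.Ioc 0 T) volume :=
      (intervalIntegrable_iff_integrableOn_Ioc_of_le hT.le).mp h1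
    exact h2.lintegral_lt_top

lemma add_rpow_le_two_rpow {x y r : ℝ} (hx : 0 ≤ x) (hy : 0 ≤ y) (hr : 0 ≤ r) :
    (x + y) ^ r ≤ 2 ^ r * (x ^ r + y ^ r) := by
  have h1 : x + y ≤ 2 * max x y := by
    rcases le_total x y with h | h
    · rw [max_eq_right h]; linarith
    · rw [max_eq_left h]; linarith
  calc (x+y)^r ≤ (2 * max x y)^r :=
        Real.rpow_le_rpow (by positivity) h1 hr
    _ = 2^r * (max x y)^r :=
        Real.mul_rpow (by norm_num) (le_max_of_le_left hx)
    _ ≤ 2^r * (x^r + y^r) := by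
        apply mul_le_mul_of_nonneg_left _ (Real.rpow_nonneg (by norm_num) r)
        rcases le_total x y with h | h
        · rw [max_eq_right h]
          exact le_add_of_nonneg_left (Real.rpow_nonneg hx r)
        · rw [max_eq_left h]
          exact le_add_of_nonneg_right (Real.rpow_nonneg hy r)

/-- Lemma 4.13: integrability of the `Φ_{1,ν}`-functional of the random field `f_t`. -/
theorem stmt_12
    (k : ℕ) (hk : 1 ≤ k) (α δ C₁ : ℝ)
    (hα : 0 < α) (hαk : α < k) (hδ : 0 < δ) (hC₁ : 0 < C₁)
    (g : ℝ → ℝ)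
    (hg0 : ∀ t ≤ (0 : ℝ), g t = 0)
    (hgsmooth : ContDiffOn ℝ k g (Set.Ioi 0))
    (hgα : ∀ t ∈ Set.Ioo (0 : ℝ) δ, |g t| ≤ C₁ * t ^ α)
    (hgk : ∀ t ∈ Set.Ioo (0 : ℝ) δ, |iteratedDeriv k g t| ≤ C₁ * t ^ (α - k))
    (hgkdec : ∀ s t : ℝ, δ < s → s ≤ t → |iteratedDeriv k g t| ≤ |iteratedDeriv k g s|)
    (ν : Measure ℝ) (hν0 : ν {0} = 0)
    (hν2 : ∫⁻ x : ℝ, ENNReal.ofReal (min 1 (x ^ 2)) ∂ν < ⊤)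
    (hν1mom : ∫⁻ x in {x : ℝ | 1 < |x|}, ENNReal.ofReal |x| ∂ν < ⊤)
    (θ : ℝ) (hθ0 : 0 < θ) (hθ2 : θ ≤ 2) (C₀ : ℝ) (hC₀ : 0 < C₀)
    (htail : ∀ t : ℝ, 1 ≤ t → ν {x : ℝ | t ≤ |x|} ≤ ENNReal.ofReal (C₀ * t ^ (-θ)))
    (β : ℝ) (hβ0 : 0 ≤ β) (hβ2 : β < 2)
    (hβmom : ∀ r : ℝ, β < r → ∫⁻ x in {x : ℝ | |x| ≤ 1}, ENNReal.ofReal (|x| ^ r) ∂ν < ⊤)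
    {Ω : Type*} [MeasurableSpace Ω] (P : Measure Ω) [IsProbabilityMeasure P]
    (σ : ℝ → Ω → ℝ) (hmeas : Measurable (Function.uncurry σ))
    (M : ℝ) (hM : 0 < M) (hbound : ∀ s ∈ Set.Ici (-δ), ∀ ω, |σ s ω| ≤ M)
    (ρ β' : ℝ) (hρ0 : 0 < ρ) (hρ : ρ ≤ min 1 θ) (hβ' : β < β') (hβ'1 : 1 ≤ β')
    (hH : ∫⁻ ω, (∫⁻ s : ℝ, ENNReal.ofReal
        (max (|if s ≤ -δ then iteratedDeriv k g (-s) * σ s ω else 0| ^ ρ)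
             (|if s ≤ -δ then iteratedDeriv k g (-s) * σ s ω else 0| ^ β'))) ∂P < ⊤)
    (hαk' : k - 1 / max β 1 < α) :
    ∀ t : ℝ, 0 < t →
      (∫⁻ u in Set.Ioc (0 : ℝ) t,
          (∫⁻ ω, PhiFun 1 ν (fun s => ftField g k σ t u s ω) ∂P)) < ⊤ ∧
      (∫⁻ ω, (∫⁻ u in Set.Ioc (0 : ℝ) t,
          levyNorm 1 ν (fun s => ftField g k σ t u s ω)) ∂P) < ⊤ := by
  intro t ht
  -- exponent bookkeeping
  have hm1 : (1:ℝ) ≤ max β 1 := le_max_right β 1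
  have hm0 : (0:ℝ) < max β 1 := lt_of_lt_of_le one_pos hm1
  have hm2 : max β 1 < 2 := max_lt hβ2 one_lt_two
  have hkα : (0:ℝ) < (k:ℝ) - α := sub_pos.mpr hαk
  have hmlt : max β 1 < 1/((k:ℝ)-α) := by
    rw [lt_div_iff₀ hkα]
    have h5 : (k:ℝ) - α < 1 / max β 1 := by linarith
    have h2 : ((k:ℝ) - α) * max β 1 < 1 := by
      calc ((k:ℝ)-α) * max β 1 < (1/max β 1) * max β 1 :=
            mul_lt_mul_of_pos_right h5 hm0
        _ = 1 := by field_simp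
    linarith [mul_comm ((k:ℝ)-α) (max β 1)]
  set r := min ((max β 1 + 2)/2) ((max β 1 + 1/((k:ℝ)-α))/2) with hrdef
  have hrgt : max β 1 < r := lt_min (by linarith) (by linarith)
  have hr1 : 1 ≤ r := le_trans hm1 hrgt.le
  have hr0 : 0 < r := lt_of_lt_of_le one_pos hr1
  have hrβ : β < r := lt_of_le_of_lt (le_max_left β 1) hrgt
  have hr2 : r ≤ 2 := le_trans (min_le_left _ _) (by linarith)
  have hrinv : r < 1/((k:ℝ)-α) := lt_of_le_of_lt (min_le_right _ _) (by linarith)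
  have hqr : -1 < (α - (k:ℝ)) * r := by
    have h3 := hrinv
    rw [lt_div_iff₀ hkα] at h3
    nlinarith
  have hq : -1 < α - (k:ℝ) := by
    have h4 : 1/max β 1 ≤ 1 := by rw [div_le_one hm0]; exact hm1
    linarith
  have hρ1 : ρ ≤ 1 := le_trans hρ (min_le_left 1 θ)
  set b := min β' 2 with hbdef
  have hb1 : 1 ≤ b := le_min hβ'1 one_le_two
  have hβb : β < b := lt_min hβ' hβ2
  have hb0 : 0 < b := lt_of_lt_of_le one_pos hb1
  -- bound for the kernel away from 0
  have hsub : Icc δ (t+δ) ⊆ Ioi (0:ℝ) := fun x hx => lt_of_lt_of_le hδ hx.1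
  have hcont : ContinuousOn (iteratedDeriv k g) (Ioi (0:ℝ)) := by
    have h1 : ContinuousOn (iteratedDerivWithin k g (Ioi (0:ℝ))) (Ioi (0:ℝ)) :=
      hgsmooth.continuousOn_iteratedDerivWithin le_rfl (uniqueDiffOn_Ioi 0)
    apply h1.congr
    intro x hx
    rw [iteratedDerivWithin_eq_iteratedFDerivWithin, iteratedDeriv_eq_iteratedFDeriv,
      iteratedFDerivWithin_of_isOpen k isOpen_Ioi hx]
  obtain ⟨B0, hB0⟩ := (isCompact_Icc : IsCompact (Icc δ (t+δ))).exists_bound_of_continuousOn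
    (hcont.mono hsub)
  set B := max B0 0 with hBdef
  have hB : ∀ v ∈ Icc δ (t+δ), |iteratedDeriv k g v| ≤ B := fun v hv =>
    le_trans (by simpa using hB0 v hv) (le_max_left _ _)
  have hBnn : 0 ≤ B := le_max_right _ _
  set G : ℝ → ℝ := fun v => C₁ * v ^ (α - (k:ℝ)) + B with hGdef
  have hGnn : ∀ v : ℝ, 0 ≤ v → 0 ≤ G v := fun v hv =>
    add_nonneg (mul_nonneg hC₁.le (Real.rpow_nonneg hv _)) hBnn
  have hGbd : ∀ v, 0 < v → v ≤ t + δ → |iteratedDeriv k g v| ≤ G v := by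
    intro v hv hvt
    by_cases hvδ : v < δ
    · calc |iteratedDeriv k g v| ≤ C₁ * v ^ (α - (k:ℝ)) := hgk v ⟨hv, hvδ⟩
        _ ≤ G v := le_add_of_nonneg_right hBnn
    · push_neg at hvδ
      calc |iteratedDeriv k g v| ≤ B := hB v ⟨hvδ, hvt⟩
        _ ≤ G v := le_add_of_nonneg_left
            (mul_nonneg hC₁.le (Real.rpow_nonneg hv.le _))
  -- the ν-side weight
  set ψ : ℝ → ℝ := fun x => if |x| ≤ 1 then |x| ^ r + |x| ^ b else |x| with hψdef
  have hψnn : ∀ x, 0 ≤ ψ x := by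
    intro x
    rw [hψdef]
    dsimp only
    split
    · exact add_nonneg (Real.rpow_nonneg (abs_nonneg x) _) (Real.rpow_nonneg (abs_nonneg x) _)
    · exact abs_nonneg x
  have habs_meas : Measurable fun x : ℝ => |x| := measurable_id.abs
  have hS : MeasurableSet {x : ℝ | |x| ≤ 1} := measurableSet_le habs_meas measurable_const
  have hψmeas : Measurable fun x : ℝ => ENNReal.ofReal (ψ x) := by
    apply ENNReal.measurable_ofReal.comp
    rw [hψdef]
    exact Measurable.ite hS
      ((habs_meas.pow measurable_const).add (habs_meas.pow measurable_const)) habs_meas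
  set K := ∫⁻ x, ENNReal.ofReal (ψ x) ∂ν with hKdef
  have hK : K < ⊤ := by
    rw [hKdef, ← lintegral_add_compl (fun x => ENNReal.ofReal (ψ x)) hS]
    have hcompl : {x : ℝ | |x| ≤ 1}ᶜ = {x : ℝ | 1 < |x|} := by
      ext x; simp [not_le]
    have h1 : ∫⁻ x in {x : ℝ | |x| ≤ 1}, ENNReal.ofReal (ψ x) ∂ν
        = (∫⁻ x in {x : ℝ | |x| ≤ 1}, ENNReal.ofReal (|x| ^ r) ∂ν)
          + ∫⁻ x in {x : ℝ | |x| ≤ 1}, ENNReal.ofReal (|x| ^ b) ∂ν := by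
      rw [← lintegral_add_left (f := fun x : ℝ => ENNReal.ofReal (|x| ^ r))
        (by exact ENNReal.measurable_ofReal.comp (habs_meas.pow measurable_const))
        (fun x => ENNReal.ofReal (|x| ^ b))]
      apply setLIntegral_congr_fun hS
      intro x hx
      rw [hψdef]
      dsimp only
      rw [if_pos (show |x| ≤ 1 from hx), ENNReal.ofReal_add (Real.rpow_nonneg (abs_nonneg x) _)
        (Real.rpow_nonneg (abs_nonneg x) _)]
    have h2 : ∫⁻ x in {x : ℝ | |x| ≤ 1}ᶜ, ENNReal.ofReal (ψ x) ∂ν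
        = ∫⁻ x in {x : ℝ | 1 < |x|}, ENNReal.ofReal |x| ∂ν := by
      rw [hcompl]
      apply setLIntegral_congr_fun (by rw [← hcompl]; exact hS.compl)
      intro x hx
      rw [hψdef]
      dsimp only
      rw [if_neg (not_le.mpr (show 1 < |x| from hx))]
    rw [h1, h2]
    exact ENNReal.add_lt_top.mpr ⟨ENNReal.add_lt_top.mpr ⟨hβmom r hrβ, hβmom b hβb⟩, hν1mom⟩
  have hKne : K ≠ ⊤ := hK.ne
  -- the ω-side weights
  set W : Ω → ℝ≥0∞ := fun ω => ∫⁻ s : ℝ, ENNReal.ofReal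
      (max (|if s ≤ -δ then iteratedDeriv k g (-s) * σ s ω else 0| ^ ρ)
           (|if s ≤ -δ then iteratedDeriv k g (-s) * σ s ω else 0| ^ β')) with hWdef
  have hWint : ∫⁻ ω, W ω ∂P < ⊤ := hH
  set T₀ := t + δ with hT₀def
  have hT₀ : 0 < T₀ := by rw [hT₀def]; linarith
  set bigB : ℝ → ℝ := fun v => if 0 < v ∧ v ≤ T₀ then (M * G v) ^ r + M * G v else 0
    with hbigBdef
  have hbigBnn : ∀ v, 0 ≤ bigB v := by
    intro v
    rw [hbigBdef]
    dsimp only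
    split
    · rename_i h
      exact add_nonneg (Real.rpow_nonneg (mul_nonneg hM.le (hGnn v h.1.le)) _)
        (mul_nonneg hM.le (hGnn v h.1.le))
    · exact le_refl 0
  -- finiteness of the deterministic time integral
  set Dint := ∫⁻ v in Ioc (0:ℝ) T₀, ENNReal.ofReal ((M * G v) ^ r + M * G v) with hDdef
  have hDlt : Dint < ⊤ := by
    set c : ℝ := 2^r * (M*C₁)^r + 2^r * (M*B)^r + M*C₁ + M*B with hcdef
    have hc1 : 0 ≤ 2^r * (M*B)^r := mul_nonneg (Real.rpow_nonneg (by norm_num) _)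
      (Real.rpow_nonneg (mul_nonneg hM.le hBnn) _)
    have hc2 : 0 ≤ 2^r * (M*C₁)^r := mul_nonneg (Real.rpow_nonneg (by norm_num) _)
      (Real.rpow_nonneg (mul_nonneg hM.le hC₁.le) _)
    have hc3 : 0 ≤ M*C₁ := mul_nonneg hM.le hC₁.le
    have hc4 : 0 ≤ M*B := mul_nonneg hM.le hBnn
    have hcnn : 0 ≤ c := by rw [hcdef]; linarith
    have hpt : ∀ v ∈ Ioc (0:ℝ) T₀, (M * G v) ^ r + M * G v ≤
        c * v ^ ((α - (k:ℝ))*r) + c * v ^ (α - (k:ℝ)) + c := by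
      intro v hv
      have hv0 : (0:ℝ) < v := hv.1
      have hx1 : (0:ℝ) ≤ M*C₁*v^(α-(k:ℝ)) := by
        exact mul_nonneg hc3 (Real.rpow_nonneg hv0.le _)
      have hMG : M * G v = M*C₁*v^(α-(k:ℝ)) + M*B := by rw [hGdef]; ring
      have h2 : (M*C₁*v^(α-(k:ℝ)))^r = (M*C₁)^r * v^((α-(k:ℝ))*r) := by
        rw [Real.mul_rpow hc3 (Real.rpow_nonneg hv0.le _), ← Real.rpow_mul hv0.le]
      have h3 : (M*G v)^r ≤ 2^r*(M*C₁)^r * v^((α-(k:ℝ))*r) + 2^r*(M*B)^r := by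
        calc (M*G v)^r ≤ 2^r * ((M*C₁*v^(α-(k:ℝ)))^r + (M*B)^r) := by
              rw [hMG]; exact add_rpow_le_two_rpow hx1 hc4 hr0.le
          _ = 2^r*(M*C₁)^r * v^((α-(k:ℝ))*r) + 2^r*(M*B)^r := by rw [h2]; ring
      have hvqr : 0 ≤ v ^ ((α-(k:ℝ))*r) := Real.rpow_nonneg hv0.le _
      have hvq : 0 ≤ v ^ (α-(k:ℝ)) := Real.rpow_nonneg hv0.le _
      have e1 : 2^r*(M*C₁)^r * v^((α-(k:ℝ))*r) ≤ c * v^((α-(k:ℝ))*r) :=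
        mul_le_mul_of_nonneg_right (by rw [hcdef]; linarith) hvqr
      have e2 : M*C₁ * v^(α-(k:ℝ)) ≤ c * v^(α-(k:ℝ)) :=
        mul_le_mul_of_nonneg_right (by rw [hcdef]; linarith) hvq
      have e3 : 2^r*(M*B)^r + M*B ≤ c := by rw [hcdef]; linarith
      linarith [h3, e1, e2, e3, hMG]
    have hmono : Dint ≤ ∫⁻ v in Ioc (0:ℝ) T₀,
        (ENNReal.ofReal (c * v ^ ((α-(k:ℝ))*r)) + ENNReal.ofReal (c * v ^ (α-(k:ℝ)))
          + ENNReal.ofReal c) := by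
      rw [hDdef]
      apply setLIntegral_mono
      · apply Measurable.fun_add
        apply Measurable.fun_add
        · exact (measurable_const.mul (measurable_id.pow measurable_const)).ennreal_ofReal
        · exact (measurable_const.mul (measurable_id.pow measurable_const)).ennreal_ofReal
        · exact measurable_const
      · intro v hv
        calc ENNReal.ofReal ((M * G v) ^ r + M * G v)
            ≤ ENNReal.ofReal (c * v ^ ((α-(k:ℝ))*r) + c * v ^ (α-(k:ℝ)) + c) :=
              ENNReal.ofReal_le_ofReal (hpt v hv)
          _ ≤ ENNReal.ofReal (c * v ^ ((α-(k:ℝ))*r) + c * v ^ (α-(k:ℝ))) + ENNReal.ofReal c :=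
              ENNReal.ofReal_add_le
          _ ≤ ENNReal.ofReal (c * v ^ ((α-(k:ℝ))*r)) + ENNReal.ofReal (c * v ^ (α-(k:ℝ)))
              + ENNReal.ofReal c := add_le_add_left ENNReal.ofReal_add_le _
    have hsplit : ∫⁻ v in Ioc (0:ℝ) T₀,
        (ENNReal.ofReal (c * v ^ ((α-(k:ℝ))*r)) + ENNReal.ofReal (c * v ^ (α-(k:ℝ)))
          + ENNReal.ofReal c)
        = (∫⁻ v in Ioc (0:ℝ) T₀, ENNReal.ofReal (c * v ^ ((α-(k:ℝ))*r)))
          + (∫⁻ v in Ioc (0:ℝ) T₀, ENNReal.ofReal (c * v ^ (α-(k:ℝ))))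
          + (∫⁻ v in Ioc (0:ℝ) T₀, ENNReal.ofReal c) := by
      rw [lintegral_add_left (by exact ((measurable_const.mul
        (measurable_id.pow measurable_const)).ennreal_ofReal.add
        (measurable_const.mul (measurable_id.pow measurable_const)).ennreal_ofReal))]
      rw [lintegral_add_left (by exact (measurable_const.mul
        (measurable_id.pow measurable_const)).ennreal_ofReal)]
    have hterm : ∀ p : ℝ, -1 < p →
        (∫⁻ v in Ioc (0:ℝ) T₀, ENNReal.ofReal (c * v ^ p)) < ⊤ := by
      intro p hp
      have : ∀ v : ℝ, ENNReal.ofReal (c * v ^ p) = ENNReal.ofReal c * ENNReal.ofReal (v ^ p) :=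
        fun v => ENNReal.ofReal_mul hcnn
      simp_rw [this]
      rw [lintegral_const_mul' (ENNReal.ofReal c) _ ENNReal.ofReal_ne_top]
      exact ENNReal.mul_lt_top ENNReal.ofReal_lt_top (lint_rpow_Ioc hp)
    calc Dint ≤ _ := hmono
      _ = _ := hsplit
      _ < ⊤ := by
        apply ENNReal.add_lt_top.mpr
        constructor
        · exact ENNReal.add_lt_top.mpr ⟨hterm _ hqr, hterm _ hq⟩
        · rw [setLIntegral_const]
          exact ENNReal.mul_lt_top ENNReal.ofReal_lt_top
            (by rw [Real.volume_Ioc]; exact ENNReal.ofReal_lt_top)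
  -- measurability of bigB
  have hGm : Measurable G := by
    rw [hGdef]
    exact (measurable_const.mul (measurable_id.pow measurable_const)).add measurable_const
  have hbigBmeas : Measurable fun v : ℝ => ENNReal.ofReal (bigB v) := by
    apply Measurable.ennreal_ofReal
    rw [hbigBdef]
    apply Measurable.ite
    · exact (measurableSet_lt measurable_const measurable_id).inter
        (measurableSet_le measurable_id measurable_const)
    · exact ((measurable_const.mul hGm).pow measurable_const).add (measurable_const.mul hGm)
    · exact measurable_const
  -- the time-shift identity
  have hE1 : ∀ u : ℝ, (∫⁻ s : ℝ, ENNReal.ofReal (bigB (u - s))) = Dint := by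
    intro u
    have hmp : MeasurePreserving (fun s : ℝ => u - s) volume volume :=
      Measure.measurePreserving_sub_left volume u
    rw [hmp.lintegral_comp hbigBmeas]
    rw [hDdef, ← lintegral_indicator measurableSet_Ioc]
    apply lintegral_congr
    intro v
    rw [hbigBdef]
    dsimp only
    by_cases h : v ∈ Ioc (0:ℝ) T₀
    · rw [indicator_of_mem h, if_pos ⟨h.1, h.2⟩]
    · rw [indicator_of_notMem h, if_neg (by simpa [mem_Ioc] using h)]
      exact ENNReal.ofReal_zero
  -- the main pointwise bound
  have hmain : ∀ u ∈ Ioc (0:ℝ) t, ∀ ω : Ω,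
      PhiFun 1 ν (fun s => ftField g k σ t u s ω) ≤ K * (Dint + W ω) := by
    intro u hu ω
    obtain ⟨hu0, hut⟩ := hu
    set F : ℝ → ℝ := fun s => ftField g k σ t u s ω with hFdef
    have hFs : ∀ s, s < u → F s = iteratedDeriv k g (u - s) * σ s ω := by
      intro s hs
      simp only [hFdef]
      unfold ftField
      rw [if_pos ⟨hu0.le, hut⟩, if_pos hs, one_mul, one_mul]
    have hFs' : ∀ s, u ≤ s → F s = 0 := by
      intro s hs
      simp only [hFdef]
      unfold ftField
      rw [if_neg (not_lt.mpr hs), mul_zero, zero_mul]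
    have hcase1 : ∀ s, -δ ≤ s → ∀ x : ℝ, phi 1 (F s * x) ≤ bigB (u - s) * ψ x := by
      intro s hsδ x
      by_cases hsu : s < u
      · have hv0 : 0 < u - s := sub_pos.mpr hsu
        have hvT : u - s ≤ T₀ := by rw [hT₀def]; linarith
        have hFle : |F s| ≤ M * G (u - s) := by
          rw [hFs s hsu, abs_mul]
          calc |iteratedDeriv k g (u-s)| * |σ s ω|
              ≤ G (u-s) * M := mul_le_mul (hGbd (u-s) hv0 hvT) (hbound s hsδ ω)
                (abs_nonneg _) (hGnn _ hv0.le)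
            _ = M * G (u-s) := mul_comm _ _
        have hstep : phi 1 (F s * x) ≤ (|F s| ^ r + |F s|) * ψ x := by
          rw [hψdef]
          dsimp only
          by_cases hx : |x| ≤ 1
          · rw [if_pos hx]
            have h3 : phi 1 (F s * x) ≤ |F s| ^ r * |x| ^ r := by
              have h4 := phi_one_le_rpow hr1 hr2 (F s * x)
              rwa [abs_mul, Real.mul_rpow (abs_nonneg _) (abs_nonneg _)] at h4
            calc phi 1 (F s * x) ≤ |F s| ^ r * |x| ^ r := h3
              _ ≤ (|F s| ^ r + |F s|) * (|x| ^ r + |x| ^ b) :=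
                  mul_le_mul (le_add_of_nonneg_right (abs_nonneg _))
                    (le_add_of_nonneg_right (Real.rpow_nonneg (abs_nonneg x) _))
                    (Real.rpow_nonneg (abs_nonneg x) _)
                    (add_nonneg (Real.rpow_nonneg (abs_nonneg _) _) (abs_nonneg _))
          · rw [if_neg hx]
            calc phi 1 (F s * x) ≤ |F s * x| := phi_one_le_abs _
              _ = |F s| * |x| := abs_mul _ _
              _ ≤ (|F s| ^ r + |F s|) * |x| := mul_le_mul_of_nonneg_right
                  (le_add_of_nonneg_left (Real.rpow_nonneg (abs_nonneg _) _)) (abs_nonneg x)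
        calc phi 1 (F s * x) ≤ (|F s| ^ r + |F s|) * ψ x := hstep
          _ ≤ ((M * G (u-s)) ^ r + M * G (u-s)) * ψ x := by
              apply mul_le_mul_of_nonneg_right _ (hψnn x)
              exact add_le_add (Real.rpow_le_rpow (abs_nonneg _) hFle hr0.le) hFle
          _ = bigB (u-s) * ψ x := by
              rw [hbigBdef]
              dsimp only
              rw [if_pos ⟨hv0, hvT⟩]
      · push_neg at hsu
        rw [hFs' s hsu, zero_mul]
        have h0 : phi 1 (0:ℝ) = 0 := by norm_num [phi]
        rw [h0]
        exact mul_nonneg (hbigBnn _) (hψnn x)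
    have hcase2 : ∀ s, s < -δ → ∀ x : ℝ, phi 1 (F s * x) ≤
        max (|if s ≤ -δ then iteratedDeriv k g (-s) * σ s ω else 0| ^ ρ)
            (|if s ≤ -δ then iteratedDeriv k g (-s) * σ s ω else 0| ^ β') * ψ x := by
      intro s hs x
      have hsle : s ≤ -δ := hs.le
      rw [if_pos hsle]
      have hsu : s < u := by linarith
      have hFle : |F s| ≤ |iteratedDeriv k g (-s) * σ s ω| := by
        rw [hFs s hsu, abs_mul, abs_mul]
        exact mul_le_mul_of_nonneg_right
          (hgkdec (-s) (u - s) (by linarith) (by linarith)) (abs_nonneg _)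
      have h1 := phi_mul_le hρ0 hρ1 hβ'1 (F s) x
      have h2 : max (|F s| ^ ρ) (|F s| ^ β') ≤
          max (|iteratedDeriv k g (-s) * σ s ω| ^ ρ) (|iteratedDeriv k g (-s) * σ s ω| ^ β') :=
        max_le_max (Real.rpow_le_rpow (abs_nonneg _) hFle hρ0.le)
          (Real.rpow_le_rpow (abs_nonneg _) hFle (by linarith))
      have h3 : (if |x| ≤ 1 then |x| ^ min β' 2 else |x|) ≤ ψ x := by
        rw [hψdef]
        dsimp only
        split
        · rw [← hbdef]
          exact le_add_of_nonneg_left (Real.rpow_nonneg (abs_nonneg x) _)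
        · exact le_refl _
      have h4 : 0 ≤ (if |x| ≤ 1 then |x| ^ min β' 2 else |x|) := by
        split
        · exact Real.rpow_nonneg (abs_nonneg x) _
        · exact abs_nonneg x
      calc phi 1 (F s * x)
          ≤ max (|F s| ^ ρ) (|F s| ^ β') * (if |x| ≤ 1 then |x| ^ min β' 2 else |x|) := h1
        _ ≤ max (|iteratedDeriv k g (-s) * σ s ω| ^ ρ)
              (|iteratedDeriv k g (-s) * σ s ω| ^ β') * ψ x :=
            mul_le_mul h2 h3 h4 (le_max_of_le_left (Real.rpow_nonneg (abs_nonneg _) _))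
    have hptwise : ∀ x s : ℝ, ENNReal.ofReal (phi 1 (F s * x)) ≤
        (ENNReal.ofReal (bigB (u - s)) + ENNReal.ofReal
          (max (|if s ≤ -δ then iteratedDeriv k g (-s) * σ s ω else 0| ^ ρ)
               (|if s ≤ -δ then iteratedDeriv k g (-s) * σ s ω else 0| ^ β')))
          * ENNReal.ofReal (ψ x) := by
      intro x s
      rcases lt_or_ge s (-δ) with hs | hs
      · calc ENNReal.ofReal (phi 1 (F s * x))
            ≤ ENNReal.ofReal
                (max (|if s ≤ -δ then iteratedDeriv k g (-s) * σ s ω else 0| ^ ρ)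
                     (|if s ≤ -δ then iteratedDeriv k g (-s) * σ s ω else 0| ^ β') * ψ x) :=
              ENNReal.ofReal_le_ofReal (hcase2 s hs x)
          _ = ENNReal.ofReal
                (max (|if s ≤ -δ then iteratedDeriv k g (-s) * σ s ω else 0| ^ ρ)
                     (|if s ≤ -δ then iteratedDeriv k g (-s) * σ s ω else 0| ^ β'))
              * ENNReal.ofReal (ψ x) :=
              ENNReal.ofReal_mul (le_max_of_le_left (Real.rpow_nonneg (abs_nonneg _) _))
          _ ≤ _ := mul_le_mul_of_nonneg_right le_add_self zero_le
      · calc ENNReal.ofReal (phi 1 (F s * x))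
            ≤ ENNReal.ofReal (bigB (u - s) * ψ x) :=
              ENNReal.ofReal_le_ofReal (hcase1 s hs x)
          _ = ENNReal.ofReal (bigB (u - s)) * ENNReal.ofReal (ψ x) :=
              ENNReal.ofReal_mul (hbigBnn _)
          _ ≤ _ := mul_le_mul_of_nonneg_right le_self_add zero_le
    have hsum : (∫⁻ s : ℝ, (ENNReal.ofReal (bigB (u - s)) + ENNReal.ofReal
          (max (|if s ≤ -δ then iteratedDeriv k g (-s) * σ s ω else 0| ^ ρ)
               (|if s ≤ -δ then iteratedDeriv k g (-s) * σ s ω else 0| ^ β'))))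
        = Dint + W ω := by
      rw [lintegral_add_left (f := fun s : ℝ => ENNReal.ofReal (bigB (u - s)))
        (by exact hbigBmeas.comp (measurable_const.sub measurable_id)) _]
      rw [hE1 u, hWdef]
    calc PhiFun 1 ν F
        = ∫⁻ x, (∫⁻ s, ENNReal.ofReal (phi 1 (F s * x))) ∂ν := rfl
      _ ≤ ∫⁻ x, (Dint + W ω) * ENNReal.ofReal (ψ x) ∂ν := by
          apply lintegral_mono
          intro x
          calc (∫⁻ s, ENNReal.ofReal (phi 1 (F s * x)))
              ≤ ∫⁻ s, (ENNReal.ofReal (bigB (u - s)) + ENNReal.ofReal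
                  (max (|if s ≤ -δ then iteratedDeriv k g (-s) * σ s ω else 0| ^ ρ)
                       (|if s ≤ -δ then iteratedDeriv k g (-s) * σ s ω else 0| ^ β')))
                  * ENNReal.ofReal (ψ x) := lintegral_mono fun s => hptwise x s
            _ = (∫⁻ s, (ENNReal.ofReal (bigB (u - s)) + ENNReal.ofReal
                  (max (|if s ≤ -δ then iteratedDeriv k g (-s) * σ s ω else 0| ^ ρ)
                       (|if s ≤ -δ then iteratedDeriv k g (-s) * σ s ω else 0| ^ β'))))
                  * ENNReal.ofReal (ψ x) :=
                lintegral_mul_const' _ _ ENNReal.ofReal_ne_top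
            _ = (Dint + W ω) * ENNReal.ofReal (ψ x) := by rw [hsum]
      _ = (Dint + W ω) * K := by
          rw [hKdef]
          exact lintegral_const_mul (Dint + W ω) hψmeas
      _ = K * (Dint + W ω) := mul_comm _ _
  -- conclusion, part one
  have hω : ∀ u ∈ Ioc (0:ℝ) t, (∫⁻ ω, PhiFun 1 ν (fun s => ftField g k σ t u s ω) ∂P)
      ≤ K * Dint + K * (∫⁻ ω, W ω ∂P) := by
    intro u hu
    calc ∫⁻ ω, PhiFun 1 ν (fun s => ftField g k σ t u s ω) ∂P
        ≤ ∫⁻ ω, K * (Dint + W ω) ∂P := lintegral_mono fun ω => hmain u hu ω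
      _ = ∫⁻ ω, (K * Dint + K * W ω) ∂P := by simp_rw [mul_add]
      _ = K * Dint + ∫⁻ ω, K * W ω ∂P := by
          rw [lintegral_add_left measurable_const, lintegral_const, measure_univ, mul_one]
      _ = K * Dint + K * (∫⁻ ω, W ω ∂P) := by rw [lintegral_const_mul' K _ hKne]
  constructor
  · calc ∫⁻ u in Ioc (0:ℝ) t, (∫⁻ ω, PhiFun 1 ν (fun s => ftField g k σ t u s ω) ∂P)
        ≤ ∫⁻ _u in Ioc (0:ℝ) t, (K * Dint + K * (∫⁻ ω, W ω ∂P)) :=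
          setLIntegral_mono measurable_const hω
      _ = (K * Dint + K * (∫⁻ ω, W ω ∂P)) * volume (Ioc (0:ℝ) t) := setLIntegral_const _ _
      _ < ⊤ := by
          apply ENNReal.mul_lt_top
          · exact ENNReal.add_lt_top.mpr
              ⟨ENNReal.mul_lt_top hK hDlt, ENNReal.mul_lt_top hK hWint⟩
          · rw [Real.volume_Ioc]
            exact ENNReal.ofReal_lt_top
  · -- part two
    have hnorm : ∀ ω : Ω, ∀ u ∈ Ioc (0:ℝ) t,
        levyNorm 1 ν (fun s => ftField g k σ t u s ω) ≤ 1 + K * Dint + K * W ω := by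
      intro ω u hu
      calc levyNorm 1 ν (fun s => ftField g k σ t u s ω)
          ≤ 1 + PhiFun 1 ν (fun s => ftField g k σ t u s ω) := levyNorm_le_one_add ν _
        _ ≤ 1 + K * (Dint + W ω) := add_le_add_right (hmain u hu ω) 1
        _ = 1 + K * Dint + K * W ω := by rw [mul_add, add_assoc]
    calc ∫⁻ ω, (∫⁻ u in Ioc (0:ℝ) t, levyNorm 1 ν (fun s => ftField g k σ t u s ω)) ∂P
        ≤ ∫⁻ ω, (∫⁻ _u in Ioc (0:ℝ) t, (1 + K * Dint + K * W ω)) ∂P := by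
          apply lintegral_mono
          intro ω
          exact setLIntegral_mono measurable_const (hnorm ω)
      _ = ∫⁻ ω, (1 + K * Dint + K * W ω) * volume (Ioc (0:ℝ) t) ∂P := by
          simp_rw [setLIntegral_const]
      _ = (∫⁻ ω, (1 + K * Dint + K * W ω) ∂P) * volume (Ioc (0:ℝ) t) := by
          rw [lintegral_mul_const' _ _ (by rw [Real.volume_Ioc]; exact ENNReal.ofReal_ne_top)]
      _ = (1 + K * Dint + K * (∫⁻ ω, W ω ∂P)) * volume (Ioc (0:ℝ) t) := by
          rw [lintegral_add_left measurable_const, lintegral_const, measure_univ, mul_one,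
            lintegral_const_mul' K _ hKne]
      _ < ⊤ := by
          apply ENNReal.mul_lt_top
          · apply ENNReal.add_lt_top.mpr
            constructor
            · exact ENNReal.add_lt_top.mpr ⟨ENNReal.one_lt_top, ENNReal.mul_lt_top hK hDlt⟩
            · exact ENNReal.mul_lt_top hK hWint
          · rw [Real.volume_Ioc]
            exact ENNReal.ofReal_lt_top


end
end
end

section
/- Let p ≥ 1. Assume: ν is a Lévy measure on ℝ and there is β ∈ [0, 2) such that ∫_{|x|≤1} |x|^r ν(dx) < ∞ for every r > β; σ : ℝ × Ω → ℝ is a jointly measurable process on a probability space (Ω, F, P) with |σ_s(ω)| ≤ M for all s ∈ [−δ, ∞), ω ∈ Ω, for some M > 0; there exist ρ ∈ (0, 1] and β' > β with β' ≥ p such that E[ ( ∫_ℝ max(|H_s|^ρ, |H_s|^{β'}) ds )^{max(1, p/2)} ] < ∞, where H_s = g^{(k)}(−s) σ_s 1_{(−∞,−δ]}(s); and α > k − 1/max(β, p). Then for every t > 0 and every a ∈ (0, 1]: ∫_0^t E[ ‖ f_t(u, ·) ‖_{p,ν_a}^p ] du < ∞, where f_t(u, s)(ω) = g^{(k)}(u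 − s) σ_s(ω) 1_{[0,t]}(u) 1_{(−∞,u)}(s) and ν_a denotes the restriction of ν to [−a, a]. -/
open MeasureTheory Set
open scoped ENNReal

noncomputable section

/-! ### Auxiliary lemmas -/

lemma my_rpow_exp_ge {x a b : ℝ} (hx0 : 0 ≤ x) (hx1 : x ≤ 1) (hb : 0 ≤ b) (hab : b ≤ a) :
    x ^ a ≤ x ^ b := by
  rcases hx0.eq_or_lt with h | h
  · rcases hb.eq_or_lt with hb' | hb'
    · rw [← h, ← hb', Real.rpow_zero]
      exact Real.zero_rpow_le_one a
    · rw [← h, Real.zero_rpow (by linarith : a ≠ 0), Real.zero_rpow (ne_of_gt hb')]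
  · exact Real.rpow_le_rpow_of_exponent_ge h hx1 hab

lemma my_sq_eq_rpow (x : ℝ) : x ^ 2 = |x| ^ (2 : ℝ) := by
  rw [← sq_abs, ← Real.rpow_natCast |x| 2]
  norm_num

/-- Key pointwise bound: for `|x| ≤ 1`,
`φ_p(y x) ≤ |x|^(min 2 q) * max(|y|^ρ, |y|^q)`. -/
lemma phi_mul_le_s13 {p ρ q x y : ℝ} (hp : 1 ≤ p) (hρ0 : 0 < ρ) (hρ2 : ρ ≤ 2)
    (hpq : p ≤ q) (hx : |x| ≤ 1) :
    phi p (y * x) ≤ |x| ^ (min 2 q) * max (|y| ^ ρ) (|y| ^ q) := by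
  have hq1 : 1 ≤ q := hp.trans hpq
  have hr2 : min 2 q ≤ 2 := min_le_left _ _
  have hrq : min 2 q ≤ q := min_le_right _ _
  have hr1 : 1 ≤ min 2 q := le_min one_le_two hq1
  have hr0 : (0:ℝ) ≤ min 2 q := by linarith
  have hax : (0:ℝ) ≤ |x| := abs_nonneg x
  have hay : (0:ℝ) ≤ |y| := abs_nonneg y
  unfold phi
  split_ifs with h1
  · rw [my_sq_eq_rpow, abs_mul, Real.mul_rpow hay hax]
    by_cases h2 : |y| ≤ 1
    · have e1 : |x| ^ (2:ℝ) ≤ |x| ^ (min 2 q) := my_rpow_exp_ge hax hx hr0 hr2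
      have e2 : |y| ^ (2:ℝ) ≤ |y| ^ ρ := my_rpow_exp_ge hay h2 hρ0.le hρ2
      calc |y| ^ (2:ℝ) * |x| ^ (2:ℝ) ≤ |y| ^ ρ * |x| ^ (min 2 q) :=
            mul_le_mul e2 e1 (Real.rpow_nonneg hax _) (Real.rpow_nonneg hay _)
        _ = |x| ^ (min 2 q) * |y| ^ ρ := mul_comm _ _
        _ ≤ |x| ^ (min 2 q) * max (|y| ^ ρ) (|y| ^ q) := by
            exact mul_le_mul_of_nonneg_left (le_max_left _ _) (Real.rpow_nonneg hax _)
    · push_neg at h2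
      have goal2 : |y| ^ (2:ℝ) * |x| ^ (2:ℝ) ≤ |x| ^ (min 2 q) * |y| ^ q := by
        rcases le_total q 2 with hq2 | hq2
        · have hrr : min 2 q = q := min_eq_right hq2
          rw [hrr]
          have : (|y| * |x|) ^ (2:ℝ) ≤ (|y| * |x|) ^ q := by
            apply my_rpow_exp_ge (by positivity) _ (by linarith) hq2
            calc |y| * |x| = |y * x| := (abs_mul y x).symm
              _ ≤ 1 := h1
          rw [Real.mul_rpow hay hax, Real.mul_rpow hay hax] at this
          calc |y| ^ (2:ℝ) * |x| ^ (2:ℝ) ≤ |y| ^ q * |x| ^ q := this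
            _ = |x| ^ q * |y| ^ q := mul_comm _ _
        · have hrr : min 2 q = 2 := min_eq_left hq2
          rw [hrr]
          have : |y| ^ (2:ℝ) ≤ |y| ^ q := Real.rpow_le_rpow_of_exponent_le h2.le hq2
          calc |y| ^ (2:ℝ) * |x| ^ (2:ℝ) = |x| ^ (2:ℝ) * |y| ^ (2:ℝ) := mul_comm _ _
            _ ≤ |x| ^ (2:ℝ) * |y| ^ q := mul_le_mul_of_nonneg_left this (Real.rpow_nonneg hax _)
      exact goal2.trans (mul_le_mul_of_nonneg_left (le_max_right _ _) (Real.rpow_nonneg hax _))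
  · push_neg at h1
    have hy1 : 1 < |y| := by
      by_contra h
      push_neg at h
      have : |y * x| ≤ 1 := by
        rw [abs_mul]
        calc |y| * |x| ≤ 1 * 1 := mul_le_mul h hx hax (by linarith)
          _ = 1 := by ring
      linarith
    calc |y * x| ^ p ≤ |y * x| ^ q := Real.rpow_le_rpow_of_exponent_le h1.le hpq
      _ = |y| ^ q * |x| ^ q := by rw [abs_mul, Real.mul_rpow hay hax]
      _ ≤ |y| ^ q * |x| ^ (min 2 q) :=
          mul_le_mul_of_nonneg_left (my_rpow_exp_ge hax hx hr0 hrq) (Real.rpow_nonneg hay _)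
      _ = |x| ^ (min 2 q) * |y| ^ q := mul_comm _ _
      _ ≤ |x| ^ (min 2 q) * max (|y| ^ ρ) (|y| ^ q) :=
          mul_le_mul_of_nonneg_left (le_max_right _ _) (Real.rpow_nonneg hax _)

/-- Scaling bound: for `l ≥ 1`, `φ_p(z/l) ≤ (1/l^(min 2 p)) φ_p(z)`. -/
lemma phi_div_le_s13 {p l z : ℝ} (hp : 1 ≤ p) (hl : 1 ≤ l) :
    phi p (z / l) ≤ (1 / l ^ (min 2 p)) * phi p z := by
  have hl0 : 0 < l := by linarith
  have hmp1 : 1 ≤ min 2 p := le_min one_le_two hp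
  have hmp2 : min 2 p ≤ 2 := min_le_left _ _
  have hmpp : min 2 p ≤ p := min_le_right _ _
  have hlmp : (1:ℝ) ≤ l ^ (min 2 p) := Real.one_le_rpow hl (by linarith)
  have hlmp0 : (0:ℝ) < l ^ (min 2 p) := by linarith
  have habs : |z / l| = |z| / l := by rw [abs_div, abs_of_pos hl0]
  unfold phi
  have hl2 : l ^ (min 2 p) ≤ l ^ (2:ℝ) := Real.rpow_le_rpow_of_exponent_le hl hmp2
  have hl2' : (0:ℝ) < l ^ (2:ℝ) := Real.rpow_pos_of_pos hl0 _
  by_cases h1 : |z| ≤ 1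
  · have h2 : |z / l| ≤ 1 := by
      rw [habs]
      calc |z| / l ≤ |z| / 1 := by
            apply div_le_div_of_nonneg_left (abs_nonneg z) one_pos hl
        _ = |z| := div_one _
        _ ≤ 1 := h1
    rw [if_pos h2, if_pos h1]
    rw [my_sq_eq_rpow, my_sq_eq_rpow z, habs, Real.div_rpow (abs_nonneg z) hl0.le]
    rw [one_div, inv_mul_eq_div, div_le_div_iff₀ hl2' hlmp0]
    have : |z| ^ (2:ℝ) * l ^ (min 2 p) ≤ |z| ^ (2:ℝ) * l ^ (2:ℝ) :=
      mul_le_mul_of_nonneg_left hl2 (Real.rpow_nonneg (abs_nonneg z) _)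
    linarith [this]
  · push_neg at h1
    rw [if_neg (by push_neg; exact h1 : ¬ |z| ≤ 1)]
    by_cases h2 : |z / l| ≤ 1
    · rw [if_pos h2]
      rw [my_sq_eq_rpow, habs, Real.div_rpow (abs_nonneg z) hl0.le, one_div, inv_mul_eq_div]
      rcases le_total p 2 with hp2 | hp2
      · have hmp : min 2 p = p := min_eq_right hp2
        rw [hmp]
        have key : (|z| / l) ^ (2:ℝ) ≤ (|z| / l) ^ p := by
          apply my_rpow_exp_ge (by positivity) _ (by linarith) hp2
          rwa [habs] at h2
        rw [Real.div_rpow (abs_nonneg z) hl0.le, Real.div_rpow (abs_nonneg z) hl0.le] at key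
        exact key
      · have hmp : min 2 p = 2 := min_eq_left hp2
        rw [hmp]
        have := Real.rpow_le_rpow_of_exponent_le h1.le hp2
        gcongr
    · rw [if_neg h2]
      rw [habs, Real.div_rpow (abs_nonneg z) hl0.le, one_div, inv_mul_eq_div]
      apply div_le_div_of_nonneg_left (Real.rpow_nonneg (abs_nonneg z) _) hlmp0
      exact Real.rpow_le_rpow_of_exponent_le hl hmpp

lemma my_lintegral_const_mul_le {α : Type*} {m0 : MeasurableSpace α} (μ : Measure α)
    (c : ℝ≥0∞) (hc : c ≠ ⊤) (f : α → ℝ≥0∞) :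
    ∫⁻ a, c * f a ∂μ ≤ c * ∫⁻ a, f a ∂μ := by
  rcases eq_or_ne c 0 with rfl | h0
  · simp
  · have h1 : c⁻¹ * ∫⁻ a, c * f a ∂μ ≤ ∫⁻ a, c⁻¹ * (c * f a) ∂μ := lintegral_const_mul_le _ _
    have h2 : ∀ a, c⁻¹ * (c * f a) = f a := fun a => by
      rw [← mul_assoc, ENNReal.inv_mul_cancel h0 hc, one_mul]
    simp_rw [h2] at h1
    calc ∫⁻ a, c * f a ∂μ = c * (c⁻¹ * ∫⁻ a, c * f a ∂μ) := by
          rw [← mul_assoc, ENNReal.mul_inv_cancel h0 hc, one_mul]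
      _ ≤ c * ∫⁻ a, f a ∂μ := mul_le_mul_right h1 _

/-- The basic Orlicz-type bound: `‖F‖^p ≤ 1 + Φ(F)^(max 1 (p/2))`. -/
lemma levyNorm_rpow_le {p : ℝ} (hp : 1 ≤ p) (ν : Measure ℝ) (F : ℝ → ℝ) :
    levyNorm p ν F ^ (p : ℝ) ≤ 1 + PhiFun p ν F ^ (max 1 (p/2) : ℝ) := by
  have hp0 : (0:ℝ) < p := lt_of_lt_of_le one_pos hp
  have hm1 : (1:ℝ) ≤ max 1 (p/2) := le_max_left _ _
  rcases eq_or_ne (PhiFun p ν F) ⊤ with hΦ | hΦ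
  · rw [hΦ, ENNReal.top_rpow_of_pos (by linarith)]
    simp
  · set c : ℝ := (PhiFun p ν F).toReal with hc
    have hc0 : 0 ≤ c := ENNReal.toReal_nonneg
    have hΦc : PhiFun p ν F = ENNReal.ofReal c := (ENNReal.ofReal_toReal hΦ).symm
    set mp : ℝ := min 2 p with hmp
    have hmp1 : 1 ≤ mp := le_min one_le_two hp
    have hmp0 : (0:ℝ) < mp := by linarith
    set l : ℝ := max 1 (c ^ (1/mp)) with hl
    have hl1 : (1:ℝ) ≤ l := le_max_left _ _
    have hl0 : (0:ℝ) < l := by linarith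
    have hlmp0 : (0:ℝ) < l ^ mp := Real.rpow_pos_of_pos hl0 _
    have hclmp : c ≤ l ^ mp := by
      calc c = (c ^ (1/mp)) ^ mp := by
            rw [← Real.rpow_mul hc0, one_div_mul_cancel hmp0.ne', Real.rpow_one]
        _ ≤ l ^ mp := Real.rpow_le_rpow (Real.rpow_nonneg hc0 _) (le_max_right _ _) hmp0.le
    have hΦl : PhiFun p ν (fun s => F s / l) ≤ 1 := by
      have step1 : PhiFun p ν (fun s => F s / l) ≤
          ENNReal.ofReal (1 / l ^ mp) * PhiFun p ν F := by
        unfold PhiFun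
        calc ∫⁻ u : ℝ, (∫⁻ s : ℝ, ENNReal.ofReal (phi p (F s / l * u))) ∂ν
            ≤ ∫⁻ u : ℝ, (∫⁻ s : ℝ, ENNReal.ofReal (1 / l ^ mp) *
                ENNReal.ofReal (phi p (F s * u))) ∂ν := by
              apply lintegral_mono; intro u; apply lintegral_mono; intro s
              simp only []
              rw [← ENNReal.ofReal_mul (by positivity)]
              apply ENNReal.ofReal_le_ofReal
              rw [div_mul_eq_mul_div]
              exact phi_div_le_s13 hp hl1
          _ ≤ ∫⁻ u : ℝ, ENNReal.ofReal (1 / l ^ mp) *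
                (∫⁻ s : ℝ, ENNReal.ofReal (phi p (F s * u))) ∂ν := by
              apply lintegral_mono; intro u
              exact my_lintegral_const_mul_le _ _ ENNReal.ofReal_ne_top _
          _ ≤ ENNReal.ofReal (1 / l ^ mp) *
                ∫⁻ u : ℝ, (∫⁻ s : ℝ, ENNReal.ofReal (phi p (F s * u))) ∂ν :=
              my_lintegral_const_mul_le _ _ ENNReal.ofReal_ne_top _
      calc PhiFun p ν (fun s => F s / l) ≤ ENNReal.ofReal (1 / l ^ mp) * PhiFun p ν F := step1
        _ ≤ ENNReal.ofReal (1 / l ^ mp) * ENNReal.ofReal (l ^ mp) := by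
            rw [hΦc]; exact mul_le_mul_right (ENNReal.ofReal_le_ofReal hclmp) _
        _ = ENNReal.ofReal ((1 / l ^ mp) * l ^ mp) := (ENNReal.ofReal_mul (by positivity)).symm
        _ = 1 := by rw [one_div_mul_cancel hlmp0.ne', ENNReal.ofReal_one]
    have hmem : ENNReal.ofReal l ∈ ((fun l : ℝ => ENNReal.ofReal l) ''
        {l : ℝ | 0 < l ∧ PhiFun p ν (fun s => F s / l) ≤ 1}) := ⟨l, ⟨hl0, hΦl⟩, rfl⟩
    have hnorm : levyNorm p ν F ≤ ENNReal.ofReal l := sInf_le hmem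
    have hlp : l ^ p ≤ 1 + c ^ (max 1 (p/2) : ℝ) := by
      have hmeq : (1/mp) * p = max 1 (p/2) := by
        rcases le_total p 2 with h | h
        · rw [hmp, min_eq_right h, one_div_mul_cancel hp0.ne', max_eq_left (by linarith)]
        · rw [hmp, min_eq_left h, max_eq_right (by linarith)]
          ring
      rcases le_total (c ^ (1/mp)) 1 with h | h
      · have hle : l = 1 := max_eq_left h
        rw [hle, Real.one_rpow]
        have : (0:ℝ) ≤ c ^ (max 1 (p/2) : ℝ) := Real.rpow_nonneg hc0 _
        linarith
      · have hle : l = c ^ (1/mp) := max_eq_right h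
        rw [hle, ← Real.rpow_mul hc0, hmeq]
        have : (0:ℝ) ≤ c ^ (max 1 (p/2) : ℝ) := Real.rpow_nonneg hc0 _
        linarith
    calc levyNorm p ν F ^ (p:ℝ) ≤ (ENNReal.ofReal l) ^ (p:ℝ) :=
          ENNReal.rpow_le_rpow hnorm hp0.le
      _ = ENNReal.ofReal (l ^ p) := by rw [← ENNReal.ofReal_rpow_of_pos hl0]
      _ ≤ ENNReal.ofReal (1 + c ^ (max 1 (p/2) : ℝ)) := ENNReal.ofReal_le_ofReal hlp
      _ = 1 + ENNReal.ofReal (c ^ (max 1 (p/2) : ℝ)) := by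
          rw [ENNReal.ofReal_add zero_le_one (Real.rpow_nonneg hc0 _), ENNReal.ofReal_one]
      _ = 1 + PhiFun p ν F ^ (max 1 (p/2) : ℝ) := by
          rcases hc0.eq_or_lt with h0 | h0
          · rw [hΦc, ← h0]
            rw [Real.zero_rpow (by linarith : (max 1 (p/2) : ℝ) ≠ 0), ENNReal.ofReal_zero,
              ENNReal.zero_rpow_of_pos (by linarith)]
          · rw [hΦc, ENNReal.ofReal_rpow_of_pos h0]

lemma my_iteratedDerivWithin_isOpen {s : Set ℝ} (hs : IsOpen s) {x : ℝ} (hx : x ∈ s)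
    (g : ℝ → ℝ) (k : ℕ) : iteratedDerivWithin k g s x = iteratedDeriv k g x := by
  simp only [iteratedDerivWithin, iteratedDeriv, iteratedFDerivWithin_of_isOpen k hs hx]

lemma my_lintegral_ofReal_lt_top {f : ℝ → ℝ} {s : Set ℝ} (hf : IntegrableOn f s) :
    ∫⁻ x in s, ENNReal.ofReal (f x) < ⊤ := by
  have h1 : ∀ x, ENNReal.ofReal (f x) ≤ ‖f x‖ₑ := fun x => by
    rw [Real.enorm_eq_ofReal_abs]
    exact ENNReal.ofReal_le_ofReal (le_abs_self _)
  exact lt_of_le_of_lt (lintegral_mono h1) hf.2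

lemma my_lint_comp_sub (u : ℝ) (f : ℝ → ℝ≥0∞) (hf : Measurable f) :
    ∫⁻ s : ℝ, f (u - s) = ∫⁻ v : ℝ, f v :=
  (Measure.measurePreserving_sub_left (volume : Measure ℝ) u).lintegral_comp hf

/-- Lemma 4.14 -/
theorem stmt_13
    (k : ℕ) (hk : 1 ≤ k) (α δ C₁ : ℝ)
    (hα : 0 < α) (hαk : α < k) (hδ : 0 < δ) (hC₁ : 0 < C₁)
    (g : ℝ → ℝ)
    (hg0 : ∀ t ≤ (0 : ℝ), g t = 0)
    (hgsmooth : ContDiffOn ℝ k g (Set.Ioi 0))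
    (hgα : ∀ t ∈ Set.Ioo (0 : ℝ) δ, |g t| ≤ C₁ * t ^ α)
    (hgk : ∀ t ∈ Set.Ioo (0 : ℝ) δ, |iteratedDeriv k g t| ≤ C₁ * t ^ (α - k))
    (hgkdec : ∀ s t : ℝ, δ < s → s ≤ t → |iteratedDeriv k g t| ≤ |iteratedDeriv k g s|)
    (p : ℝ) (hp : 1 ≤ p)
    (ν : Measure ℝ) (hν0 : ν {0} = 0)
    (hν2 : ∫⁻ x : ℝ, ENNReal.ofReal (min 1 (x ^ 2)) ∂ν < ⊤)
    (β : ℝ) (hβ0 : 0 ≤ β) (hβ2 : β < 2)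
    (hβmom : ∀ r : ℝ, β < r → ∫⁻ x in {x : ℝ | |x| ≤ 1}, ENNReal.ofReal (|x| ^ r) ∂ν < ⊤)
    {Ω : Type*} [MeasurableSpace Ω] (P : Measure Ω) [IsProbabilityMeasure P]
    (σ : ℝ → Ω → ℝ) (hmeas : Measurable (Function.uncurry σ))
    (M : ℝ) (hM : 0 < M) (hbound : ∀ s ∈ Set.Ici (-δ), ∀ ω, |σ s ω| ≤ M)
    (ρ β' : ℝ) (hρ0 : 0 < ρ) (hρ1 : ρ ≤ 1) (hβ' : β < β') (hβ'p : p ≤ β')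
    (hH : ∫⁻ ω, (∫⁻ s : ℝ, ENNReal.ofReal
        (max (|if s ≤ -δ then iteratedDeriv k g (-s) * σ s ω else 0| ^ ρ)
             (|if s ≤ -δ then iteratedDeriv k g (-s) * σ s ω else 0| ^ β'))) ^
          (max 1 (p / 2) : ℝ) ∂P < ⊤)
    (hαk' : k - 1 / max β p < α) :
    ∀ t : ℝ, 0 < t → ∀ a : ℝ, 0 < a → a ≤ 1 →
      (∫⁻ u in Set.Ioc (0 : ℝ) t,
          (∫⁻ ω, (levyNorm p (ν.restrict (Set.Icc (-a) a))
              (fun s => ftField g k σ t u s ω)) ^ (p : ℝ) ∂P)) < ⊤ := by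
  intro t ht a ha0 ha1
  have hp0 : (0:ℝ) < p := lt_of_lt_of_le one_pos hp
  have hm1 : (1:ℝ) ≤ max 1 (p/2) := le_max_left _ _
  have hm0 : (0:ℝ) ≤ max 1 (p/2) := by linarith
  have hmx0 : (0:ℝ) < max β p := lt_of_lt_of_le hp0 (le_max_right _ _)
  have hmx1 : (1:ℝ) ≤ max β p := le_trans hp (le_max_right _ _)
  have hkα0 : (0:ℝ) < (k:ℝ) - α := by linarith
  have hkainv : (k:ℝ) - α < 1 / max β p := by linarith
  have hmxlt : max β p < 1 / ((k:ℝ) - α) := by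
    rw [lt_div_iff₀ hkα0]
    have h1 := (lt_div_iff₀ hmx0).mp hkainv
    have h2 : ((k:ℝ) - α) * max β p = max β p * ((k:ℝ) - α) := mul_comm _ _
    linarith
  set q : ℝ := min β' ((max β p + 1/((k:ℝ)-α))/2) with hqdef
  have hmidgt : max β p < (max β p + 1/((k:ℝ)-α))/2 := by linarith
  have hmidlt : (max β p + 1/((k:ℝ)-α))/2 < 1/((k:ℝ)-α) := by linarith
  have hpq : p ≤ q := le_min hβ'p (le_of_lt (lt_of_le_of_lt (le_max_right β p) hmidgt))
  have hβq : β < q := lt_min hβ' (lt_of_le_of_lt (le_max_left β p) hmidgt)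
  have hq1 : (1:ℝ) ≤ q := hp.trans hpq
  have hq0 : (0:ℝ) < q := by linarith
  have hqβ' : q ≤ β' := min_le_left _ _
  have hρq : ρ ≤ q := hρ1.trans hq1
  have hqlt : q < 1/((k:ℝ)-α) := lt_of_le_of_lt (min_le_right _ _) hmidlt
  have hqkα : q * ((k:ℝ)-α) < 1 := by
    have h2 := mul_lt_mul_of_pos_right hqlt hkα0
    rwa [one_div, inv_mul_cancel₀ hkα0.ne'] at h2
  have h1lt : (k:ℝ) - α < 1 := lt_of_lt_of_le hkainv ((div_le_one hmx0).mpr hmx1)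
  have hρkα : ρ * ((k:ℝ)-α) < 1 := by
    have h2 : ρ*((k:ℝ)-α) ≤ 1*((k:ℝ)-α) := mul_le_mul_of_nonneg_right hρ1 hkα0.le
    linarith
  have hβr : β < min 2 q := lt_min hβ2 hβq
  have hr0 : (0:ℝ) < min 2 q := lt_of_le_of_lt hβ0 hβr
  have hθρ : (-1:ℝ) < (α - (k:ℝ)) * ρ := by
    have h2 : (α - (k:ℝ)) * ρ = -(ρ*((k:ℝ)-α)) := by ring
    linarith
  have hθq : (-1:ℝ) < (α - (k:ℝ)) * q := by
    have h2 : (α - (k:ℝ)) * q = -(q*((k:ℝ)-α)) := by ring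
    linarith
  -- continuity of the k-th derivative on (0,∞), and a bound on [δ, t+δ]
  have hcontI : ContinuousOn (iteratedDeriv k g) (Set.Ioi (0:ℝ)) := by
    have h1 : ContinuousOn (iteratedDerivWithin k g (Set.Ioi 0)) (Set.Ioi (0:ℝ)) :=
      hgsmooth.continuousOn_iteratedDerivWithin (by exact_mod_cast le_refl (k:ℕ∞))
        isOpen_Ioi.uniqueDiffOn
    exact h1.congr fun x hx => (my_iteratedDerivWithin_isOpen isOpen_Ioi hx g k).symm
  obtain ⟨B, hB⟩ : ∃ B : ℝ, ∀ v ∈ Set.Icc δ (t+δ), ‖iteratedDeriv k g v‖ ≤ B :=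
    isCompact_Icc.exists_bound_of_continuousOn
      (hcontI.mono (fun v hv => lt_of_lt_of_le hδ hv.1))
  have hB' : ∀ v ∈ Set.Icc δ (t+δ), |iteratedDeriv k g v| ≤ B := by
    intro v hv; have h := hB v hv; rwa [Real.norm_eq_abs] at h
  have hB0 : 0 ≤ B := le_trans (abs_nonneg _) (hB' δ ⟨le_refl δ, by linarith⟩)
  -- constants
  set cB : ℝ := (M*B)^ρ + (M*B)^q with hcBdef
  have hMB0 : 0 ≤ M*B := by positivity
  set K₁ : ℝ≥0∞ := ∫⁻ v in Set.Ioo (0:ℝ) δ,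
      ENNReal.ofReal ((M*C₁*v^(α-(k:ℝ)))^ρ + (M*C₁*v^(α-(k:ℝ)))^q) with hK₁def
  have hK₁ : K₁ < ⊤ := by
    rw [hK₁def]
    apply my_lintegral_ofReal_lt_top
    have h1 : IntegrableOn (fun v : ℝ => (M*C₁)^ρ * v^((α-(k:ℝ))*ρ) +
        (M*C₁)^q * v^((α-(k:ℝ))*q)) (Set.Ioo (0:ℝ) δ) := by
      apply Integrable.add
      · exact ((intervalIntegral.integrableOn_Ioo_rpow_iff hδ).mpr hθρ).const_mul _
      · exact ((intervalIntegral.integrableOn_Ioo_rpow_iff hδ).mpr hθq).const_mul _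
    apply IntegrableOn.congr_fun h1 ?_ measurableSet_Ioo
    intro v hv
    have hv0 : (0:ℝ) < v := hv.1
    simp only []
    rw [Real.mul_rpow (by positivity) (Real.rpow_nonneg hv0.le _),
        Real.mul_rpow (by positivity) (Real.rpow_nonneg hv0.le _),
        ← Real.rpow_mul hv0.le, ← Real.rpow_mul hv0.le]
  have hbasemeas : Measurable (fun v : ℝ => ENNReal.ofReal
      ((M*C₁*v^(α-(k:ℝ)))^ρ + (M*C₁*v^(α-(k:ℝ)))^q)) := by
    have hb : Measurable (fun v : ℝ => M*C₁*v^(α-(k:ℝ))) :=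
      (measurable_id.pow_const _).const_mul _
    exact ((hb.pow_const _).add (hb.pow_const _)).ennreal_ofReal
  set Cν : ℝ≥0∞ := ∫⁻ x, ENNReal.ofReal (|x| ^ (min 2 q))
      ∂(ν.restrict (Set.Icc (-a) a)) with hCνdef
  have hCν : Cν < ⊤ := by
    have hsub : Set.Icc (-a) a ⊆ {x : ℝ | |x| ≤ 1} := fun x hx =>
      le_trans (abs_le.mpr ⟨hx.1, hx.2⟩) ha1
    calc Cν ≤ ∫⁻ x in {x : ℝ | |x| ≤ 1}, ENNReal.ofReal (|x| ^ (min 2 q)) ∂ν :=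
          lintegral_mono_set hsub
      _ < ⊤ := hβmom _ hβr
  set K : ℝ≥0∞ := K₁ + ENNReal.ofReal cB * ENNReal.ofReal t with hKdef
  have hK : K < ⊤ := by
    rw [hKdef]
    exact ENNReal.add_lt_top.mpr ⟨hK₁, ENNReal.mul_lt_top ENNReal.ofReal_lt_top
      ENNReal.ofReal_lt_top⟩
  -- tail functional
  set Z : Ω → ℝ≥0∞ := fun ω => ∫⁻ s : ℝ, ENNReal.ofReal
      (max (|if s ≤ -δ then iteratedDeriv k g (-s) * σ s ω else 0| ^ ρ)
           (|if s ≤ -δ then iteratedDeriv k g (-s) * σ s ω else 0| ^ β')) with hZdef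
  have hHZ : ∫⁻ ω, (Z ω) ^ (max 1 (p/2) : ℝ) ∂P < ⊤ := by
    simp only [hZdef]; exact hH
  -- main pointwise claim
  have key : ∀ u : ℝ, u ∈ Set.Ioc (0:ℝ) t → ∀ ω : Ω,
      PhiFun p (ν.restrict (Set.Icc (-a) a)) (fun s => ftField g k σ t u s ω) ≤
        Cν * (K + Z ω) := by
    intro u hu ω
    obtain ⟨hu0, hut⟩ := hu
    set F : ℝ → ℝ := fun s => ftField g k σ t u s ω with hFdef
    set D₁ : ℝ → ℝ≥0∞ := (Set.Ioo (u-δ) u).indicator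
        (fun s => ENNReal.ofReal ((M*C₁*(u-s)^(α-(k:ℝ)))^ρ + (M*C₁*(u-s)^(α-(k:ℝ)))^q))
      with hD₁def
    set D₂ : ℝ → ℝ≥0∞ := (Set.Icc (-δ) (u-δ)).indicator (fun _ => ENNReal.ofReal cB)
      with hD₂def
    set E : ℝ → ℝ≥0∞ := fun s => ENNReal.ofReal
        (max (|if s ≤ -δ then iteratedDeriv k g (-s) * σ s ω else 0| ^ ρ)
             (|if s ≤ -δ then iteratedDeriv k g (-s) * σ s ω else 0| ^ β')) with hEdef
    have hmeasD₁ : Measurable D₁ := by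
      rw [hD₁def]
      apply Measurable.indicator ?_ measurableSet_Ioo
      have hb : Measurable (fun s : ℝ => M*C₁*(u-s)^(α-(k:ℝ))) :=
        ((measurable_const.sub measurable_id).pow_const _).const_mul _
      exact ((hb.pow_const _).add (hb.pow_const _)).ennreal_ofReal
    have hmeasD₂ : Measurable D₂ := by
      rw [hD₂def]; exact measurable_const.indicator measurableSet_Icc
    -- pointwise domination of the max-function
    have hWle : ∀ s : ℝ, ENNReal.ofReal (max (|F s| ^ ρ) (|F s| ^ q)) ≤
        (D₁ s + D₂ s) + E s := by
      intro s
      by_cases hsu : s < u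
      · have hFs : F s = iteratedDeriv k g (u-s) * σ s ω := by
          simp only [hFdef, ftField, if_pos (And.intro hu0.le hut), if_pos hsu, one_mul, mul_one]
        by_cases hs1 : s < -δ
        · have hif : (if s ≤ -δ then iteratedDeriv k g (-s) * σ s ω else 0)
              = iteratedDeriv k g (-s) * σ s ω := if_pos hs1.le
          have hFH : |F s| ≤ |iteratedDeriv k g (-s) * σ s ω| := by
            rw [hFs, abs_mul, abs_mul]
            exact mul_le_mul_of_nonneg_right
              (hgkdec (-s) (u-s) (by linarith) (by linarith)) (abs_nonneg _)
          refine le_trans ?_ (self_le_add_left (E s) (D₁ s + D₂ s))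
          have hEs : E s = ENNReal.ofReal
              (max (|iteratedDeriv k g (-s) * σ s ω| ^ ρ)
                   (|iteratedDeriv k g (-s) * σ s ω| ^ β')) := by
            rw [hEdef]; simp only [hif]
          rw [hEs]
          apply ENNReal.ofReal_le_ofReal
          apply max_le
          · exact le_max_of_le_left (Real.rpow_le_rpow (abs_nonneg _) hFH hρ0.le)
          · rcases le_total |iteratedDeriv k g (-s) * σ s ω| 1 with h01 | h01
            · refine le_max_of_le_left ?_
              calc |F s| ^ q ≤ |iteratedDeriv k g (-s) * σ s ω| ^ q :=
                    Real.rpow_le_rpow (abs_nonneg _) hFH hq0.le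
                _ ≤ |iteratedDeriv k g (-s) * σ s ω| ^ ρ :=
                    my_rpow_exp_ge (abs_nonneg _) h01 hρ0.le hρq
            · refine le_max_of_le_right ?_
              calc |F s| ^ q ≤ |iteratedDeriv k g (-s) * σ s ω| ^ q :=
                    Real.rpow_le_rpow (abs_nonneg _) hFH hq0.le
                _ ≤ |iteratedDeriv k g (-s) * σ s ω| ^ β' :=
                    Real.rpow_le_rpow_of_exponent_le h01 hqβ'
        · push_neg at hs1
          have hσM : |σ s ω| ≤ M := hbound s hs1 ω
          by_cases hs2 : u - δ < s
          · have hv : u - s ∈ Set.Ioo (0:ℝ) δ := ⟨by linarith, by linarith⟩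
            have hgb := hgk (u-s) hv
            have hFb : |F s| ≤ M*C₁*(u-s)^(α-(k:ℝ)) := by
              rw [hFs, abs_mul]
              calc |iteratedDeriv k g (u-s)| * |σ s ω| ≤ (C₁*(u-s)^(α-(k:ℝ))) * M :=
                    mul_le_mul hgb hσM (abs_nonneg _)
                      (mul_nonneg hC₁.le (Real.rpow_nonneg (le_of_lt hv.1) _))
                _ = M*C₁*(u-s)^(α-(k:ℝ)) := by ring
            have hD₁s : D₁ s = ENNReal.ofReal
                ((M*C₁*(u-s)^(α-(k:ℝ)))^ρ + (M*C₁*(u-s)^(α-(k:ℝ)))^q) := by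
              rw [hD₁def]; exact Set.indicator_of_mem (Set.mem_Ioo.mpr ⟨hs2, hsu⟩) _
            refine le_trans ?_ (le_trans (self_le_add_right (D₁ s) (D₂ s))
              (self_le_add_right _ (E s)))
            rw [hD₁s]
            apply ENNReal.ofReal_le_ofReal
            have hA0 : (0:ℝ) ≤ M*C₁*(u-s)^(α-(k:ℝ)) :=
              mul_nonneg (mul_nonneg hM.le hC₁.le) (Real.rpow_nonneg (le_of_lt hv.1) _)
            apply max_le
            · calc |F s|^ρ ≤ (M*C₁*(u-s)^(α-(k:ℝ)))^ρ :=
                    Real.rpow_le_rpow (abs_nonneg _) hFb hρ0.le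
                _ ≤ _ := le_add_of_nonneg_right (Real.rpow_nonneg hA0 _)
            · calc |F s|^q ≤ (M*C₁*(u-s)^(α-(k:ℝ)))^q :=
                    Real.rpow_le_rpow (abs_nonneg _) hFb hq0.le
                _ ≤ _ := le_add_of_nonneg_left (Real.rpow_nonneg hA0 _)
          · push_neg at hs2
            have hv : u - s ∈ Set.Icc δ (t+δ) := ⟨by linarith, by linarith⟩
            have hgb : |iteratedDeriv k g (u-s)| ≤ B := hB' _ hv
            have hFb : |F s| ≤ M*B := by
              rw [hFs, abs_mul]
              calc |iteratedDeriv k g (u-s)| * |σ s ω| ≤ B * M :=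
                    mul_le_mul hgb hσM (abs_nonneg _) hB0
                _ = M*B := mul_comm _ _
            have hD₂s : D₂ s = ENNReal.ofReal cB := by
              rw [hD₂def]; exact Set.indicator_of_mem (Set.mem_Icc.mpr ⟨hs1, hs2⟩) _
            refine le_trans ?_ (le_trans (self_le_add_left (D₂ s) (D₁ s))
              (self_le_add_right _ (E s)))
            rw [hD₂s, hcBdef]
            apply ENNReal.ofReal_le_ofReal
            apply max_le
            · calc |F s|^ρ ≤ (M*B)^ρ := Real.rpow_le_rpow (abs_nonneg _) hFb hρ0.le
                _ ≤ _ := le_add_of_nonneg_right (Real.rpow_nonneg hMB0 _)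
            · calc |F s|^q ≤ (M*B)^q := Real.rpow_le_rpow (abs_nonneg _) hFb hq0.le
                _ ≤ _ := le_add_of_nonneg_left (Real.rpow_nonneg hMB0 _)
      · push_neg at hsu
        have hFs : F s = 0 := by
          simp only [hFdef, ftField, if_neg (not_lt.mpr hsu), mul_zero, zero_mul]
        rw [hFs, abs_zero, Real.zero_rpow hρ0.ne', Real.zero_rpow hq0.ne', max_self,
          ENNReal.ofReal_zero]
        exact zero_le
    -- integrate the dominating function
    have hD₁int : ∫⁻ s, D₁ s = K₁ := by
      have hcomp : D₁ = fun s => ((Set.Ioo (0:ℝ) δ).indicator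
          (fun v => ENNReal.ofReal ((M*C₁*v^(α-(k:ℝ)))^ρ + (M*C₁*v^(α-(k:ℝ)))^q))) (u - s) := by
        funext s
        rw [hD₁def]
        by_cases h : u - s ∈ Set.Ioo (0:ℝ) δ
        · rw [Set.indicator_of_mem h,
            Set.indicator_of_mem (show s ∈ Set.Ioo (u-δ) u from
              ⟨by have := h.2; linarith, by have := h.1; linarith⟩)]
        · rw [Set.indicator_of_notMem h, Set.indicator_of_notMem]
          intro hs
          exact h ⟨by have := hs.2; linarith, by have := hs.1; linarith⟩
      rw [hcomp, my_lint_comp_sub u _ (hbasemeas.indicator measurableSet_Ioo), hK₁def,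
        ← lintegral_indicator measurableSet_Ioo]
    have hD₂int : ∫⁻ s, D₂ s ≤ ENNReal.ofReal cB * ENNReal.ofReal t := by
      rw [hD₂def, lintegral_indicator_const measurableSet_Icc, Real.volume_Icc]
      exact mul_le_mul_right (ENNReal.ofReal_le_ofReal (by linarith)) _
    have hIntW : ∫⁻ s, ENNReal.ofReal (max (|F s| ^ ρ) (|F s| ^ q)) ≤ K + Z ω := by
      calc ∫⁻ s, ENNReal.ofReal (max (|F s| ^ ρ) (|F s| ^ q))
          ≤ ∫⁻ s, ((D₁ s + D₂ s) + E s) := lintegral_mono hWle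
        _ = (∫⁻ s, (D₁ s + D₂ s)) + ∫⁻ s, E s := lintegral_add_left (hmeasD₁.add hmeasD₂) _
        _ = ((∫⁻ s, D₁ s) + ∫⁻ s, D₂ s) + ∫⁻ s, E s := by rw [lintegral_add_left hmeasD₁]
        _ ≤ K + Z ω := by
            apply add_le_add
            · rw [hKdef, hD₁int]
              exact add_le_add_right hD₂int _
            · rw [hZdef, hEdef]
      -- here Z ω = ∫⁻ s, E s by definition
    calc PhiFun p (ν.restrict (Set.Icc (-a) a)) F
        ≤ ∫⁻ x in Set.Icc (-a) a,
            ENNReal.ofReal (|x| ^ (min 2 q)) * (K + Z ω) ∂ν := by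
          apply setLIntegral_mono
            ((((measurable_id.abs).pow_const _).ennreal_ofReal).mul_const _)
          intro x hx
          have hx1 : |x| ≤ 1 := le_trans (abs_le.mpr ⟨hx.1, hx.2⟩) ha1
          calc (∫⁻ s, ENNReal.ofReal (phi p (F s * x)))
              ≤ ∫⁻ s, ENNReal.ofReal (|x| ^ (min 2 q)) *
                  ENNReal.ofReal (max (|F s|^ρ) (|F s|^q)) := by
                apply lintegral_mono; intro s
                simp only []
                rw [← ENNReal.ofReal_mul (Real.rpow_nonneg (abs_nonneg _) _)]
                exact ENNReal.ofReal_le_ofReal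
                  (phi_mul_le_s13 hp hρ0 (hρ1.trans one_le_two) hpq hx1)
            _ ≤ ENNReal.ofReal (|x| ^ (min 2 q)) *
                  ∫⁻ s, ENNReal.ofReal (max (|F s|^ρ) (|F s|^q)) :=
                my_lintegral_const_mul_le _ _ ENNReal.ofReal_ne_top _
            _ ≤ ENNReal.ofReal (|x| ^ (min 2 q)) * (K + Z ω) := mul_le_mul_right hIntW _
      _ = Cν * (K + Z ω) := by
          rw [hCνdef]
          exact lintegral_mul_const _ (((measurable_id.abs).pow_const _).ennreal_ofReal)
  -- combine
  set cm : ℝ≥0∞ := Cν ^ (max 1 (p/2) : ℝ) * 2 ^ (max 1 (p/2) : ℝ) with hcmdef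
  have h2top : (2:ℝ≥0∞) ^ (max 1 (p/2) : ℝ) ≠ ⊤ :=
    (ENNReal.rpow_lt_top_of_nonneg hm0 (by norm_num)).ne
  have hcmtop : cm ≠ ⊤ := by
    rw [hcmdef]
    exact ENNReal.mul_ne_top (ENNReal.rpow_lt_top_of_nonneg hm0 hCν.ne).ne h2top
  have hKm : K ^ (max 1 (p/2) : ℝ) ≠ ⊤ := (ENNReal.rpow_lt_top_of_nonneg hm0 hK.ne).ne
  have hpow2 : ∀ x y : ℝ≥0∞, (x + y) ^ (max 1 (p/2) : ℝ) ≤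
      2 ^ (max 1 (p/2) : ℝ) * (x ^ (max 1 (p/2) : ℝ) + y ^ (max 1 (p/2) : ℝ)) := by
    intro x y
    have h1 : x + y ≤ 2 * max x y := by
      rcases le_total x y with h | h
      · calc x + y ≤ y + y := add_le_add_left h _
          _ = 2 * y := (two_mul y).symm
          _ ≤ 2 * max x y := mul_le_mul_right (le_max_right _ _) _
      · calc x + y ≤ x + x := add_le_add_right h _
          _ = 2 * x := (two_mul x).symm
          _ ≤ 2 * max x y := mul_le_mul_right (le_max_left _ _) _
    calc (x+y) ^ (max 1 (p/2) : ℝ) ≤ (2 * max x y) ^ (max 1 (p/2) : ℝ) :=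
          ENNReal.rpow_le_rpow h1 hm0
      _ = 2 ^ (max 1 (p/2) : ℝ) * (max x y) ^ (max 1 (p/2) : ℝ) :=
          ENNReal.mul_rpow_of_nonneg _ _ hm0
      _ ≤ 2 ^ (max 1 (p/2) : ℝ) * (x ^ (max 1 (p/2) : ℝ) + y ^ (max 1 (p/2) : ℝ)) := by
          apply mul_le_mul_right
          rcases le_total x y with h | h
          · rw [max_eq_right h]
            exact le_add_self
          · rw [max_eq_left h]
            exact self_le_add_right _ _
  set c₀ : ℝ≥0∞ := (1 + cm * K ^ (max 1 (p/2) : ℝ)) +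
      cm * (∫⁻ ω, (Z ω) ^ (max 1 (p/2) : ℝ) ∂P) with hc₀def
  have hc₀ : c₀ ≠ ⊤ := by
    rw [hc₀def]
    apply ENNReal.add_ne_top.mpr
    constructor
    · exact ENNReal.add_ne_top.mpr ⟨ENNReal.one_ne_top, ENNReal.mul_ne_top hcmtop hKm⟩
    · exact ENNReal.mul_ne_top hcmtop hHZ.ne
  have hinner : ∀ u ∈ Set.Ioc (0:ℝ) t,
      (∫⁻ ω, (levyNorm p (ν.restrict (Set.Icc (-a) a))
          (fun s => ftField g k σ t u s ω)) ^ (p : ℝ) ∂P) ≤ c₀ := by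
    intro u hu
    have hptw : ∀ ω : Ω, (levyNorm p (ν.restrict (Set.Icc (-a) a))
        (fun s => ftField g k σ t u s ω)) ^ (p : ℝ) ≤
        (1 + cm * K ^ (max 1 (p/2) : ℝ)) + cm * (Z ω) ^ (max 1 (p/2) : ℝ) := by
      intro ω
      calc (levyNorm p (ν.restrict (Set.Icc (-a) a))
            (fun s => ftField g k σ t u s ω)) ^ (p : ℝ)
          ≤ 1 + (PhiFun p (ν.restrict (Set.Icc (-a) a))
              (fun s => ftField g k σ t u s ω)) ^ (max 1 (p/2) : ℝ) :=
            levyNorm_rpow_le hp _ _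
        _ ≤ 1 + (Cν * (K + Z ω)) ^ (max 1 (p/2) : ℝ) :=
            add_le_add_right (ENNReal.rpow_le_rpow (key u hu ω) hm0) _
        _ ≤ 1 + cm * (K ^ (max 1 (p/2) : ℝ) + (Z ω) ^ (max 1 (p/2) : ℝ)) := by
            apply add_le_add_right
            calc (Cν * (K + Z ω)) ^ (max 1 (p/2) : ℝ)
                = Cν ^ (max 1 (p/2) : ℝ) * (K + Z ω) ^ (max 1 (p/2) : ℝ) :=
                  ENNReal.mul_rpow_of_nonneg _ _ hm0
              _ ≤ Cν ^ (max 1 (p/2) : ℝ) * (2 ^ (max 1 (p/2) : ℝ) *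
                    (K ^ (max 1 (p/2) : ℝ) + (Z ω) ^ (max 1 (p/2) : ℝ))) :=
                  mul_le_mul_right (hpow2 K (Z ω)) _
              _ = cm * (K ^ (max 1 (p/2) : ℝ) + (Z ω) ^ (max 1 (p/2) : ℝ)) := by
                  rw [hcmdef, mul_assoc]
        _ = (1 + cm * K ^ (max 1 (p/2) : ℝ)) + cm * (Z ω) ^ (max 1 (p/2) : ℝ) := by
            rw [mul_add, add_assoc]
    calc (∫⁻ ω, (levyNorm p (ν.restrict (Set.Icc (-a) a))
          (fun s => ftField g k σ t u s ω)) ^ (p : ℝ) ∂P)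
        ≤ ∫⁻ ω, ((1 + cm * K ^ (max 1 (p/2) : ℝ)) +
            cm * (Z ω) ^ (max 1 (p/2) : ℝ)) ∂P := lintegral_mono hptw
      _ = (1 + cm * K ^ (max 1 (p/2) : ℝ)) +
            ∫⁻ ω, cm * (Z ω) ^ (max 1 (p/2) : ℝ) ∂P := by
          rw [lintegral_add_left measurable_const, lintegral_const, measure_univ, mul_one]
      _ ≤ (1 + cm * K ^ (max 1 (p/2) : ℝ)) +
            cm * ∫⁻ ω, (Z ω) ^ (max 1 (p/2) : ℝ) ∂P :=
          add_le_add_right (my_lintegral_const_mul_le _ _ hcmtop _) _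
      _ = c₀ := by rw [hc₀def]
  calc (∫⁻ u in Set.Ioc (0 : ℝ) t,
        (∫⁻ ω, (levyNorm p (ν.restrict (Set.Icc (-a) a))
            (fun s => ftField g k σ t u s ω)) ^ (p : ℝ) ∂P))
      ≤ ∫⁻ _ in Set.Ioc (0 : ℝ) t, c₀ := setLIntegral_mono measurable_const hinner
    _ = c₀ * volume (Set.Ioc (0:ℝ) t) := setLIntegral_const _ _
    _ < ⊤ := ENNReal.mul_lt_top hc₀.lt_top (by
        rw [Real.volume_Ioc]
        exact ENNReal.ofReal_lt_top)

end
end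

section
/- Let k ≥ 1 be an integer and α > 0. Then: (a) there exists C > 0 such that |h_k(x)| ≤ C x^{α−k} for all x ≥ k + 1; (b) for every p > 0 with p(α − k) < −1 one has Σ_{l=0}^∞ sup_{u ∈ [0,1]} |h_k(l + u)|^p < ∞; (c) for every β > 0 with β(α − k) < −1 one has ∫_ℝ |h_k(x)|^β dx < ∞. -/
open MeasureTheory Set
open scoped ENNReal

noncomputable section

/-- `h_k(x) = Σ_{j=0}^k (−1)^j · binom(k, j) · (x − j)₊^α`. -/
def hkFun (k : ℕ) (α : ℝ) (x : ℝ) : ℝ :=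
  ∑ j ∈ Finset.range (k + 1),
    (-1 : ℝ) ^ j * (k.choose j) * (max (x - j) 0) ^ α

lemma alt_pascal (m : ℕ) (f : ℕ → ℝ) :
    ∑ j ∈ Finset.range (m+2), (-1:ℝ)^j * ((m+1).choose j) * f j
      = (∑ j ∈ Finset.range (m+1), (-1:ℝ)^j * (m.choose j) * f j)
        - ∑ j ∈ Finset.range (m+1), (-1:ℝ)^j * (m.choose j) * f (j+1) := by
  have e1 : ∑ j ∈ Finset.range (m+1), (-1:ℝ)^j * (m.choose j) * f j
      = (∑ j ∈ Finset.range m, (-1:ℝ)^(j+1) * (m.choose (j+1)) * f (j+1)) + f 0 := by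
    rw [Finset.sum_range_succ' (fun j => (-1:ℝ)^j * (m.choose j) * f j) m]
    simp
  have e2 : ∑ j ∈ Finset.range m, (-1:ℝ)^(j+1) * (m.choose (j+1)) * f (j+1)
      = ∑ j ∈ Finset.range (m+1), (-1:ℝ)^(j+1) * (m.choose (j+1)) * f (j+1) := by
    rw [Finset.sum_range_succ]
    simp [Nat.choose_succ_self]
  rw [Finset.sum_range_succ' (fun j => (-1:ℝ)^j * ((m+1).choose j) * f j) (m+1), e1, e2]
  simp only [pow_zero, Nat.choose_zero_right, Nat.cast_one, one_mul]
  have key : ∑ j ∈ Finset.range (m+1), (-1:ℝ)^(j+1) * (((m+1).choose (j+1) : ℕ) : ℝ) * f (j+1)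
      = ∑ j ∈ Finset.range (m+1),
          ((-1:ℝ)^(j+1) * (m.choose (j+1)) * f (j+1) - (-1:ℝ)^j * (m.choose j) * f (j+1)) := by
    refine Finset.sum_congr rfl fun j _ => ?_
    have hc : (((m+1).choose (j+1) : ℕ) : ℝ) = (m.choose j : ℝ) + (m.choose (j+1) : ℝ) := by
      exact_mod_cast congrArg (Nat.cast (R := ℝ)) (Nat.choose_succ_succ' m j)
    rw [hc]; ring
  rw [key, Finset.sum_sub_distrib]
  ring

lemma rpow_le_max {u v t c : ℝ} (hu : 0 < u) (hut : u ≤ t) (htv : t ≤ v) :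
    t ^ c ≤ max (u ^ c) (v ^ c) := by
  rcases le_or_gt 0 c with hc | hc
  · exact le_max_of_le_right (Real.rpow_le_rpow (by linarith) htv hc)
  · exact le_max_of_le_left (Real.rpow_le_rpow_of_nonpos hu hut hc.le)

lemma core_bound : ∀ (m : ℕ) (a x : ℝ), (m:ℝ) < x →
    |∑ j ∈ Finset.range (m+1), (-1:ℝ)^j * (m.choose j) * (x - j)^a|
      ≤ (∏ i ∈ Finset.range m, |a - i|) * max ((x - m) ^ (a - m)) (x ^ (a - m)) := by
  intro m
  induction m with
  | zero =>
    intro a x hx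
    norm_num at hx ⊢
    rw [abs_of_nonneg (Real.rpow_nonneg hx.le a)]
  | succ m ih =>
    intro a x hx
    have hx' : (m:ℝ) + 1 < x := by push_cast at hx; linarith
    set F : ℝ → ℝ := fun y => ∑ j ∈ Finset.range (m+1), (-1:ℝ)^j * (m.choose j) * (y - j)^a
      with hF
    have hderiv : ∀ y : ℝ, (m:ℝ) < y → HasDerivAt F
        (a * ∑ j ∈ Finset.range (m+1), (-1:ℝ)^j * (m.choose j) * (y - j)^(a-1)) y := by
      intro y hy
      have hder : HasDerivAt F
          (∑ j ∈ Finset.range (m+1), (-1:ℝ)^j * (m.choose j) * (a * (y - j)^(a-1))) y := by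
        apply HasDerivAt.fun_sum
        intro j hj
        have hjm : (j:ℝ) ≤ m := by
          exact_mod_cast Nat.lt_succ_iff.mp (Finset.mem_range.mp hj)
        have hyj : y - (j:ℝ) ≠ 0 := ne_of_gt (by linarith)
        have h1 : HasDerivAt (fun y : ℝ => (y - (j:ℝ))^a) ((a * (y - j)^(a-1)) * 1) y :=
          by
            have := (Real.hasDerivAt_rpow_const (x := y - (j:ℝ)) (p := a) (Or.inl hyj)).comp y
              ((hasDerivAt_id y).sub_const (j:ℝ))
            exact this
        have h2 := h1.const_mul ((-1:ℝ)^j * (m.choose j))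
        rw [mul_one] at h2
        exact h2
      convert hder using 1
      rw [Finset.mul_sum]
      exact Finset.sum_congr rfl fun j _ => by ring
    have hcont : ContinuousOn F (Set.Icc (x-1) x) := by
      intro y hy
      exact ((hderiv y (by linarith [hy.1])).continuousAt).continuousWithinAt
    obtain ⟨ξ, hξ, hslope⟩ := exists_hasDerivAt_eq_slope F _ (by linarith : x - 1 < x) hcont
      (fun y hy => hderiv y (by linarith [hy.1]))
    have hxx : x - (x - 1) = 1 := by ring
    rw [hxx, div_one] at hslope
    -- rewrite the sum as F x - F (x-1)
    have hpascal : ∑ j ∈ Finset.range (m+1+1), (-1:ℝ)^j * ((m+1).choose j) * (x - j)^a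
        = F x - F (x-1) := by
      have := alt_pascal m (fun j => (x - (j:ℝ))^a)
      rw [this]
      simp only [hF]
      congr 1
      refine Finset.sum_congr rfl fun j _ => ?_
      have : x - ((j:ℝ)+1) = x - 1 - j := by ring
      push_cast
      rw [this]
    rw [hpascal, ← hslope]
    have hmξ : (m:ℝ) < ξ := by linarith [hξ.1]
    have hih := ih (a-1) ξ hmξ
    have habs : |a * ∑ j ∈ Finset.range (m+1), (-1:ℝ)^j * (m.choose j) * (ξ - j)^(a-1)|
        ≤ |a| * ((∏ i ∈ Finset.range m, |a - 1 - i|) *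
            max ((ξ - m) ^ (a - 1 - m)) (ξ ^ (a - 1 - m))) := by
      rw [abs_mul]
      refine mul_le_mul_of_nonneg_left ?_ (abs_nonneg a)
      convert hih using 4 <;> ring
    refine habs.trans ?_
    -- product identity
    have hprod : (∏ i ∈ Finset.range (m+1), |a - (i:ℝ)|)
        = |a| * ∏ i ∈ Finset.range m, |a - 1 - (i:ℝ)| := by
      rw [Finset.prod_range_succ' (fun i => |a - (i:ℝ)|) m]
      simp only [Nat.cast_zero, sub_zero]
      rw [mul_comm]
      congr 1
      refine Finset.prod_congr rfl fun i _ => ?_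
      push_cast
      ring_nf
    rw [hprod]
    rw [mul_assoc]
    refine mul_le_mul_of_nonneg_left ?_ (abs_nonneg a)
    refine mul_le_mul_of_nonneg_left ?_ (Finset.prod_nonneg fun i _ => abs_nonneg _)
    -- max bound
    have hc1 : a - 1 - (m:ℝ) = a - ((m:ℕ)+1:ℝ) := by ring
    have hcast : ((m+1:ℕ):ℝ) = (m:ℝ) + 1 := by push_cast; ring
    rw [hcast]
    apply max_le
    · rw [hc1]
      have h1 : x - ((m:ℝ)+1) ≤ ξ - m := by linarith [hξ.1]
      have h2 : ξ - (m:ℝ) ≤ x := by linarith [hξ.2, (Nat.cast_nonneg m : (0:ℝ) ≤ m)]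
      have := rpow_le_max (u := x - ((m:ℝ)+1)) (v := x) (t := ξ - m)
        (by linarith) h1 h2 (c := a - ((m:ℝ)+1))
      convert this using 3 <;> ring
    · rw [hc1]
      have h1 : x - ((m:ℝ)+1) ≤ ξ := by linarith [hξ.1, (Nat.cast_nonneg m : (0:ℝ) ≤ m)]
      have h2 : ξ ≤ x := hξ.2.le
      have := rpow_le_max (u := x - ((m:ℝ)+1)) (v := x) (t := ξ)
        (by linarith) h1 h2 (c := a - ((m:ℝ)+1))
      convert this using 3 <;> ring

lemma hkFun_eq_core (k : ℕ) (α x : ℝ) (hx : (k:ℝ) < x) :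
    hkFun k α x = ∑ j ∈ Finset.range (k+1), (-1:ℝ)^j * (k.choose j) * (x - j)^α := by
  unfold hkFun
  refine Finset.sum_congr rfl fun j hj => ?_
  have hjk : (j:ℝ) ≤ k := by
    exact_mod_cast Nat.lt_succ_iff.mp (Finset.mem_range.mp hj)
  rw [max_eq_left (by linarith)]


lemma hk_decay (k : ℕ) (α : ℝ) :
    ∃ C > (0:ℝ), ∀ x : ℝ, (k:ℝ) + 1 ≤ x → |hkFun k α x| ≤ C * x ^ (α - k) := by
  set P := ∏ i ∈ Finset.range k, |α - (i:ℝ)| with hP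
  set D := max 1 ((k+1:ℝ) ^ ((k:ℝ) - α)) with hD
  have hPnn : 0 ≤ P := Finset.prod_nonneg fun i _ => abs_nonneg _
  have hD1 : (1:ℝ) ≤ D := le_max_left _ _
  refine ⟨(P+1) * D, by nlinarith, fun x hx => ?_⟩
  have hk0 : (0:ℝ) ≤ k := Nat.cast_nonneg k
  have hxk : (k:ℝ) < x := by linarith
  have hxpos : (0:ℝ) < x := by linarith
  have hxk0 : (0:ℝ) < x - k := by linarith
  rw [hkFun_eq_core k α x hxk]
  have h1 := core_bound k α x hxk
  have hxα : (0:ℝ) ≤ x ^ (α - (k:ℝ)) := Real.rpow_nonneg hxpos.le _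
  have hmax : max ((x - k) ^ (α - (k:ℝ))) (x ^ (α - (k:ℝ))) ≤ D * x ^ (α - (k:ℝ)) := by
    apply max_le
    · rcases le_or_gt 0 (α - (k:ℝ)) with hc | hc
      · calc (x-(k:ℝ)) ^ (α - (k:ℝ)) ≤ x ^ (α - (k:ℝ)) :=
              Real.rpow_le_rpow hxk0.le (by linarith) hc
          _ ≤ D * x ^ (α - (k:ℝ)) := le_mul_of_one_le_left hxα hD1
      · have hdiv : x / ((k:ℝ)+1) ≤ x - k := by
          rw [div_le_iff₀ (by linarith)]
          nlinarith
        have hdivpos : (0:ℝ) < x / ((k:ℝ)+1) := by positivity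
        calc (x-(k:ℝ)) ^ (α - (k:ℝ))
            ≤ (x / ((k:ℝ)+1)) ^ (α - (k:ℝ)) :=
              Real.rpow_le_rpow_of_nonpos hdivpos hdiv hc.le
          _ = ((k:ℝ)+1) ^ ((k:ℝ) - α) * x ^ (α - (k:ℝ)) := by
              rw [Real.div_rpow hxpos.le (by linarith), div_eq_mul_inv,
                ← Real.rpow_neg (by linarith), neg_sub]
              ring
          _ ≤ D * x ^ (α - (k:ℝ)) :=
              mul_le_mul_of_nonneg_right (le_max_right _ _) hxα
    · exact le_mul_of_one_le_left hxα hD1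
  calc |∑ j ∈ Finset.range (k+1), (-1:ℝ)^j * (k.choose j) * (x - j)^α|
      ≤ P * max ((x - k) ^ (α - (k:ℝ))) (x ^ (α - (k:ℝ))) := h1
    _ ≤ P * (D * x ^ (α - (k:ℝ))) := mul_le_mul_of_nonneg_left hmax hPnn
    _ ≤ (P+1) * D * x ^ (α - (k:ℝ)) := by
        rw [← mul_assoc]
        refine mul_le_mul_of_nonneg_right ?_ hxα
        nlinarith

lemma hkFun_continuous (k : ℕ) {α : ℝ} (hα : 0 ≤ α) : Continuous (hkFun k α) := by
  unfold hkFun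
  refine continuous_finset_sum _ fun j _ => ?_
  exact continuous_const.mul ((Real.continuous_rpow_const hα).comp
    ((continuous_id.sub continuous_const).max continuous_const))

lemma hkFun_nonpos (k : ℕ) {α : ℝ} (hα : 0 < α) {x : ℝ} (hx : x ≤ 0) : hkFun k α x = 0 := by
  unfold hkFun
  refine Finset.sum_eq_zero fun j _ => ?_
  have : max (x - (j:ℝ)) 0 = 0 := max_eq_right (by
    have : (0:ℝ) ≤ j := Nat.cast_nonneg j
    linarith)
  rw [this, Real.zero_rpow hα.ne', mul_zero]


lemma stmt_b (k : ℕ) (hk : 1 ≤ k) (α : ℝ) (hα : 0 < α) :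
    (∀ p : ℝ, 0 < p → p * (α - k) < -1 →
      Summable (fun l : ℕ =>
        sSup ((fun u : ℝ => |hkFun k α ((l : ℝ) + u)| ^ p) '' Set.Icc (0 : ℝ) 1))) := by
  obtain ⟨C, hC, hbd⟩ := hk_decay k α
  intro p hp hpc
  have hc : α - (k:ℝ) < 0 := by nlinarith
  set S : ℕ → ℝ := fun l =>
    sSup ((fun u : ℝ => |hkFun k α ((l : ℝ) + u)| ^ p) '' Set.Icc (0 : ℝ) 1) with hS
  rw [← summable_nat_add_iff (k+1)]
  have key : ∀ n : ℕ, (∀ y ∈ (fun u : ℝ => |hkFun k α (((n + (k+1) : ℕ) : ℝ) + u)| ^ p) ''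
      Set.Icc (0 : ℝ) 1, y ≤ C ^ p * ((n + (k+1) : ℕ) : ℝ) ^ ((α - k) * p)) := by
    intro n y hy
    obtain ⟨u, hu, rfl⟩ := hy
    set L : ℝ := ((n + (k+1) : ℕ) : ℝ) with hL
    have hL1 : (k:ℝ) + 1 ≤ L := by
      rw [hL]; push_cast; linarith [Nat.cast_nonneg (α := ℝ) n]
    have hL0 : (0:ℝ) < L := by linarith [Nat.cast_nonneg (α := ℝ) k]
    have hx : (k:ℝ) + 1 ≤ L + u := by linarith [hu.1]
    have h1 : |hkFun k α (L + u)| ≤ C * (L + u) ^ (α - (k:ℝ)) := hbd _ hx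
    have h2 : (L + u) ^ (α - (k:ℝ)) ≤ L ^ (α - (k:ℝ)) :=
      Real.rpow_le_rpow_of_nonpos hL0 (by linarith [hu.1]) hc.le
    have h3 : |hkFun k α (L + u)| ≤ C * L ^ (α - (k:ℝ)) :=
      h1.trans (mul_le_mul_of_nonneg_left h2 hC.le)
    have h4 : |hkFun k α (L + u)| ^ p ≤ (C * L ^ (α - (k:ℝ))) ^ p :=
      Real.rpow_le_rpow (abs_nonneg _) h3 hp.le
    refine h4.trans_eq ?_
    rw [Real.mul_rpow hC.le (Real.rpow_nonneg hL0.le _), ← Real.rpow_mul hL0.le]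
  have hBnn : ∀ n : ℕ, (0:ℝ) ≤ C ^ p * ((n + (k+1) : ℕ) : ℝ) ^ ((α - k) * p) := by
    intro n
    exact mul_nonneg (Real.rpow_nonneg hC.le _) (Real.rpow_nonneg (Nat.cast_nonneg _) _)
  have hsum : Summable (fun n : ℕ => C ^ p * ((n + (k+1) : ℕ) : ℝ) ^ ((α - k) * p)) := by
    have h0 : Summable (fun n : ℕ => ((n:ℝ)) ^ ((α - k) * p)) :=
      Real.summable_nat_rpow.mpr (by nlinarith)
    exact ((summable_nat_add_iff (k+1)).mpr h0).mul_left _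
  refine Summable.of_nonneg_of_le ?_ ?_ hsum
  · intro n
    have hne : |hkFun k α (((n + (k+1) : ℕ) : ℝ) + 0)| ^ p ∈
        (fun u : ℝ => |hkFun k α (((n + (k+1) : ℕ) : ℝ) + u)| ^ p) '' Set.Icc (0 : ℝ) 1 :=
      Set.mem_image_of_mem _ (by constructor <;> norm_num)
    have hbdd : BddAbove ((fun u : ℝ => |hkFun k α (((n + (k+1) : ℕ) : ℝ) + u)| ^ p) ''
        Set.Icc (0 : ℝ) 1) := ⟨_, fun y hy => key n y hy⟩
    exact le_trans (Real.rpow_nonneg (abs_nonneg _) p) (le_csSup hbdd hne)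
  · intro n
    exact Real.sSup_le (key n) (hBnn n)


lemma stmt_c (k : ℕ) (hk : 1 ≤ k) (α : ℝ) (hα : 0 < α) :
    (∀ β : ℝ, 0 < β → β * (α - k) < -1 →
      ∫⁻ x : ℝ, ENNReal.ofReal (|hkFun k α x| ^ β) < ⊤) := by
  obtain ⟨C, hC, hbd⟩ := hk_decay k α
  intro β hβ hβc
  set f : ℝ → ℝ≥0∞ := fun x => ENNReal.ofReal (|hkFun k α x| ^ β) with hf
  rw [← lintegral_add_compl f (measurableSet_Iic (a := (k:ℝ)+1))]
  have hk0 : (0:ℝ) ≤ k := Nat.cast_nonneg k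
  apply ENNReal.add_lt_top.mpr
  constructor
  · -- over Iic (k+1)
    have hsplit : Set.Iic ((k:ℝ)+1) = Set.Iic (0:ℝ) ∪ Set.Ioc (0:ℝ) ((k:ℝ)+1) :=
      (Set.Iic_union_Ioc_eq_Iic (by linarith)).symm
    rw [hsplit, lintegral_union measurableSet_Ioc (Set.Iic_disjoint_Ioc le_rfl)]
    apply ENNReal.add_lt_top.mpr
    constructor
    · have : ∫⁻ x in Set.Iic (0:ℝ), f x ≤ ∫⁻ _ in Set.Iic (0:ℝ), (0:ℝ≥0∞) := by
        refine setLIntegral_mono' measurableSet_Iic fun x hx => ?_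
        rw [hf]
        simp only [hkFun_nonpos k hα (hx : x ≤ 0), abs_zero, Real.zero_rpow hβ.ne',
          ENNReal.ofReal_zero, le_refl]
      simpa using lt_of_le_of_lt this (by simp)
    · -- bounded on compact
      have hcont : ContinuousOn (fun x => |hkFun k α x| ^ β) (Set.Icc (0:ℝ) ((k:ℝ)+1)) :=
        ((Real.continuous_rpow_const hβ.le).comp
          (continuous_abs.comp (hkFun_continuous k hα.le))).continuousOn
      obtain ⟨M, hM⟩ := (isCompact_Icc).exists_bound_of_continuousOn hcont
      have hle : ∫⁻ x in Set.Ioc (0:ℝ) ((k:ℝ)+1), f x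
          ≤ ∫⁻ _ in Set.Ioc (0:ℝ) ((k:ℝ)+1), ENNReal.ofReal M := by
        refine setLIntegral_mono' measurableSet_Ioc fun x hx => ?_
        have hx' : x ∈ Set.Icc (0:ℝ) ((k:ℝ)+1) := ⟨hx.1.le, hx.2⟩
        have := hM x hx'
        exact ENNReal.ofReal_le_ofReal ((le_abs_self _).trans (by simpa using this))
      rw [setLIntegral_const] at hle
      exact lt_of_le_of_lt hle (ENNReal.mul_lt_top ENNReal.ofReal_lt_top measure_Ioc_lt_top)
  · -- over Ioi (k+1)
    rw [Set.compl_Iic]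
    have hInt : IntegrableOn (fun x : ℝ => C ^ β * x ^ ((α - (k:ℝ)) * β)) (Set.Ioi ((k:ℝ)+1)) := by
      refine Integrable.const_mul ?_ _
      exact (integrableOn_Ioi_rpow_iff (by linarith)).mpr (by nlinarith)
    have hfin := hInt.lintegral_lt_top
    refine lt_of_le_of_lt ?_ hfin
    refine setLIntegral_mono' measurableSet_Ioi fun x hx => ?_
    have hx' : (k:ℝ) + 1 ≤ x := le_of_lt hx
    have hxpos : (0:ℝ) < x := by linarith
    have h1 : |hkFun k α x| ≤ C * x ^ (α - (k:ℝ)) := hbd x hx'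
    have h2 : |hkFun k α x| ^ β ≤ (C * x ^ (α - (k:ℝ))) ^ β :=
      Real.rpow_le_rpow (abs_nonneg _) h1 hβ.le
    refine ENNReal.ofReal_le_ofReal (h2.trans_eq ?_)
    rw [Real.mul_rpow hC.le (Real.rpow_nonneg hxpos.le _), ← Real.rpow_mul hxpos.le]

/-- Decay and integrability properties of `h_k`. -/
theorem stmt_15 (k : ℕ) (hk : 1 ≤ k) (α : ℝ) (hα : 0 < α) :
    (∃ C > (0 : ℝ), ∀ x : ℝ, (k : ℝ) + 1 ≤ x → |hkFun k α x| ≤ C * x ^ (α - k)) ∧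
    (∀ p : ℝ, 0 < p → p * (α - k) < -1 →
      Summable (fun l : ℕ =>
        sSup ((fun u : ℝ => |hkFun k α ((l : ℝ) + u)| ^ p) '' Set.Icc (0 : ℝ) 1))) ∧
    (∀ β : ℝ, 0 < β → β * (α - k) < -1 →
      ∫⁻ x : ℝ, ENNReal.ofReal (|hkFun k α x| ^ β) < ⊤) :=
  ⟨hk_decay k α, stmt_b k hk α hα, stmt_c k hk α hα⟩

end
end
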